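/- arXiv:2006.01941 — 11 statements merged into one kernel-verified Lean document; each statement's English description precedes it below -/
import Mathlib

section
/- For any function f: F_{2^n} → F_{2^n}, the number of vanishing flats satisfies |VB_{n,f}| = (1/3) · Σ_{a ∈ F_{2^n}*, b ∈ F_{2^n}} C(δ_f(a,b)/2, 2), where C(m,2) = m(m-1)/2. -/
def delta {K : Type*} [Field K] [Fintype K] [DecidableEq K] (f : K → K) (a b : K) : ℕ :=
  (Finset.univ.filter (fun x => f (x + a) + f x = b)).card

def VF {K : Type*} [Field K] [Fintype K] [DecidableEq K] (f : K → K) : Finset (Finset K) :=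
  Finset.univ.filter (fun s => s.card = 4 ∧ s.sum id = 0 ∧ s.sum f = 0)

set_option linter.unusedSectionVars false
set_option linter.unusedVariables false
set_option maxHeartbeats 1000000

open Finset

/-! ### Arithmetic auxiliary lemmas -/

private lemma VB_two_mul_choose_two (m : ℕ) : 2 * m.choose 2 = m * (m - 1) := by
  induction m with
  | zero => simp
  | succ k ih =>
    rw [Nat.choose_succ_succ, Nat.mul_add, ih, Nat.choose_one_right]
    cases k with
    | zero => simp
    | succ j =>
      simp only [Nat.succ_sub_one]
      ring

private lemma VB_arith {d : ℕ} (hd : Even d) : d * (d - 2) = 8 * ((d / 2).choose 2) := by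
  obtain ⟨m, rfl⟩ := hd
  have hdiv : (m + m) / 2 = m := by omega
  rw [hdiv]
  have h2 := VB_two_mul_choose_two m
  cases m with
  | zero => simp
  | succ k =>
    have h1 : k + 1 + (k + 1) - 2 = k + k := by omega
    have h3 : k + 1 - 1 = k := by omega
    rw [h1]
    rw [h3] at h2
    have h4 : (k + 1 + (k + 1)) * (k + k) = 4 * (2 * ((k + 1).choose 2)) := by rw [h2]; ring
    rw [h4]; ring

section Aux

variable {K : Type*} [Field K] [Fintype K] [DecidableEq K]

/-! ### Generic finset auxiliary lemmas -/

private lemma VB_card_le_three (u v w : K) : ({u, v, w} : Finset K).card ≤ 3 := by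
  have h1 := Finset.card_insert_le u ({v, w} : Finset K)
  have h2 := Finset.card_insert_le v ({w} : Finset K)
  simp only [card_singleton] at h2
  omega

private lemma VB_four_distinct {w x y z : K} (h : ({w, x, y, z} : Finset K).card = 4) :
    w ≠ x ∧ w ≠ y ∧ w ≠ z ∧ x ≠ y ∧ x ≠ z ∧ y ≠ z := by
  refine ⟨?_, ?_, ?_, ?_, ?_, ?_⟩ <;> rintro rfl
  · have hs : ({w, w, y, z} : Finset K) ⊆ {w, y, z} := by
      intro t ht; simp at ht ⊢; tauto
    have := (Finset.card_le_card hs).trans (VB_card_le_three w y z); omega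
  · have hs : ({w, x, w, z} : Finset K) ⊆ {w, x, z} := by
      intro t ht; simp at ht ⊢; tauto
    have := (Finset.card_le_card hs).trans (VB_card_le_three w x z); omega
  · have hs : ({w, x, y, w} : Finset K) ⊆ {w, x, y} := by
      intro t ht; simp at ht ⊢; tauto
    have := (Finset.card_le_card hs).trans (VB_card_le_three w x y); omega
  · have hs : ({w, x, x, z} : Finset K) ⊆ {w, x, z} := by
      intro t ht; simp at ht ⊢; tauto
    have := (Finset.card_le_card hs).trans (VB_card_le_three w x z); omega
  · have hs : ({w, x, y, x} : Finset K) ⊆ {w, x, y} := by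
      intro t ht; simp at ht ⊢; tauto
    have := (Finset.card_le_card hs).trans (VB_card_le_three w x y); omega
  · have hs : ({w, x, y, y} : Finset K) ⊆ {w, x, y} := by
      intro t ht; simp at ht ⊢; tauto
    have := (Finset.card_le_card hs).trans (VB_card_le_three w x y); omega

private lemma VB_card_four {w x y z : K} (h1 : w ≠ x) (h2 : w ≠ y) (h3 : w ≠ z) (h4 : x ≠ y)
    (h5 : x ≠ z) (h6 : y ≠ z) : ({w, x, y, z} : Finset K).card = 4 := by
  rw [Finset.card_insert_of_notMem (by simp [h1, h2, h3]),
    Finset.card_insert_of_notMem (by simp [h4, h5]),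
    Finset.card_insert_of_notMem (by simp [h6]), card_singleton]

private lemma VB_sum_four {M : Type*} [AddCommMonoid M] {w x y z : K} (F : K → M)
    (h1 : w ≠ x) (h2 : w ≠ y) (h3 : w ≠ z) (h4 : x ≠ y) (h5 : x ≠ z) (h6 : y ≠ z) :
    ({w, x, y, z} : Finset K).sum F = F w + (F x + (F y + F z)) := by
  rw [Finset.sum_insert (by simp [h1, h2, h3]), Finset.sum_insert (by simp [h4, h5]),
    Finset.sum_insert (by simp [h6]), Finset.sum_singleton]

/-! ### Characteristic two auxiliary lemmas -/

variable [CharP K 2]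

private lemma VB_self (u : K) : u + u = 0 := CharTwo.add_self_eq_zero u

private lemma VB_eq_of_add_eq_zero {u v : K} (h : u + v = 0) : u = v := by
  have h2 : u = u + (v + v) := by rw [VB_self, add_zero]
  rw [h2, ← add_assoc, h, zero_add]

/-! ### The sets `Dset` -/

private def Dset (f : K → K) (a b : K) : Finset K :=
  Finset.univ.filter (fun x => f (x + a) + f x = b)

private lemma VB_mem_Dset {f : K → K} {a b x : K} : x ∈ Dset f a b ↔ f (x + a) + f x = b := by
  simp [Dset]

private lemma VB_mem_Dset_add {f : K → K} {a b x : K} (hx : x ∈ Dset f a b) :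
    x + a ∈ Dset f a b := by
  rw [VB_mem_Dset] at hx ⊢
  rw [add_assoc, VB_self, add_zero, add_comm]
  exact hx

private lemma VB_delta_eq {f : K → K} {a b : K} : delta f a b = (Dset f a b).card := rfl

private lemma VB_even_card_Dset (f : K → K) {a : K} (ha : a ≠ 0) (b : K) :
    Even (Dset f a b).card := by
  classical
  set D := Dset f a b with hD
  set P : Finset (Finset K) := D.image (fun x => ({x, x + a} : Finset K)) with hP
  have hadd : ∀ x : K, x + a + a = x := by
    intro x; rw [add_assoc, VB_self, add_zero]
  have hne : ∀ x : K, x ≠ x + a := by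
    intro x h
    exact ha (by have := h.symm; rwa [add_eq_left] at this)
  have hunion : D = P.biUnion (fun p => p) := by
    ext z
    simp only [mem_biUnion, hP, mem_image]
    constructor
    · intro hz
      exact ⟨{z, z + a}, ⟨z, hz, rfl⟩, by simp⟩
    · rintro ⟨p, ⟨x, hx, rfl⟩, hz⟩
      simp only [mem_insert, mem_singleton] at hz
      rcases hz with rfl | rfl
      · exact hx
      · exact VB_mem_Dset_add hx
  have hdisj : ∀ p ∈ P, ∀ q ∈ P, p ≠ q → Disjoint p q := by
    rintro p hp q hq hpq
    simp only [hP, mem_image] at hp hq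
    obtain ⟨x, -, rfl⟩ := hp
    obtain ⟨y, -, rfl⟩ := hq
    rw [Finset.disjoint_left]
    intro z hz hz'
    simp only [mem_insert, mem_singleton] at hz hz'
    apply hpq
    rcases hz with rfl | rfl <;> rcases hz' with h | h
    · rw [h]
    · rw [h, hadd, Finset.pair_comm]
    · rw [← h, hadd, Finset.pair_comm]
    · have hxy : x = y := by simpa [hadd] using congrArg (· + a) h
      rw [hxy]
  have hcard2 : ∀ p ∈ P, p.card = 2 := by
    rintro p hp
    simp only [hP, mem_image] at hp
    obtain ⟨x, -, rfl⟩ := hp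
    rw [Finset.card_insert_of_notMem (by simp [hne x]), card_singleton]
  rw [hunion, Finset.card_biUnion hdisj]
  have hsum : ∑ p ∈ P, p.card = ∑ p ∈ P, 2 := Finset.sum_congr rfl hcard2
  rw [hsum, Finset.sum_const, smul_eq_mul]
  exact ⟨P.card, by ring⟩

/-! ### Counting ordered pairs of pairs with a fixed nonzero difference -/

private def Ma (f : K → K) (a : K) : Finset (K × K) :=
  Finset.univ.filter
    (fun p => f (p.1 + a) + f p.1 = f (p.2 + a) + f p.2 ∧ p.2 ≠ p.1 ∧ p.2 ≠ p.1 + a)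

private lemma VB_card_fiber_ab (f : K → K) {a : K} (ha : a ≠ 0) (b : K) :
    ((Ma f a).filter (fun p => f (p.1 + a) + f p.1 = b)).card
      = delta f a b * (delta f a b - 2) := by
  classical
  set D := Dset f a b with hD
  have hne : ∀ x : K, x + a ≠ x := by
    intro x h
    exact ha (by rwa [add_eq_left] at h)
  have hkey : (Ma f a).filter (fun p => f (p.1 + a) + f p.1 = b)
      = (D.sigma (fun x => (D.erase x).erase (x + a))).image (fun q => (q.1, q.2)) := by
    ext ⟨x, y⟩
    simp only [Ma, mem_filter, mem_univ, true_and, mem_image, mem_sigma, mem_erase,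
      Sigma.exists, Prod.mk.injEq]
    constructor
    · rintro ⟨⟨heq, hyx, hya⟩, hb⟩
      exact ⟨x, y, ⟨VB_mem_Dset.2 hb, hya, hyx, VB_mem_Dset.2 (heq ▸ hb)⟩, rfl, rfl⟩
    · rintro ⟨x', y', ⟨hx', hya, hyx, hy'⟩, rfl, rfl⟩
      rw [VB_mem_Dset] at hx' hy'
      exact ⟨⟨by rw [hx', hy'], hyx, hya⟩, hx'⟩
  rw [hkey]
  rw [Finset.card_image_of_injective _ (by
    rintro ⟨x, y⟩ ⟨x', y'⟩ h
    simp only [Prod.mk.injEq] at h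
    obtain ⟨rfl, rfl⟩ := h
    rfl)]
  rw [Finset.card_sigma]
  have hcong : ∀ x ∈ D, ((D.erase x).erase (x + a)).card = D.card - 2 := by
    intro x hx
    rw [Finset.card_erase_of_mem (Finset.mem_erase.2 ⟨hne x, VB_mem_Dset_add hx⟩),
      Finset.card_erase_of_mem hx]
    omega
  rw [Finset.sum_congr rfl hcong, Finset.sum_const, smul_eq_mul, VB_delta_eq]

private lemma VB_card_Ma (f : K → K) {a : K} (ha : a ≠ 0) :
    (Ma f a).card = ∑ b : K, delta f a b * (delta f a b - 2) := by
  classical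
  rw [Finset.card_eq_sum_card_fiberwise
    (f := fun p : K × K => f (p.1 + a) + f p.1) (t := Finset.univ) (fun x _ => mem_univ _)]
  exact Finset.sum_congr rfl (fun b _ => VB_card_fiber_ab f ha b)

/-! ### The big set of triples -/

private def Nset (f : K → K) : Finset (K × K × K) :=
  Finset.univ.filter (fun t => t.1 ≠ 0 ∧
    f (t.2.1 + t.1) + f t.2.1 = f (t.2.2 + t.1) + f t.2.2 ∧
    t.2.2 ≠ t.2.1 ∧ t.2.2 ≠ t.2.1 + t.1)

private lemma VB_card_Nset_sum (f : K → K) :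
    (Nset f).card = ∑ a ∈ Finset.univ.erase (0 : K), (Ma f a).card := by
  classical
  rw [Finset.card_eq_sum_card_fiberwise
    (f := fun t : K × K × K => t.1) (t := Finset.univ.erase 0)
    (fun t ht => by
      simp only [Nset, mem_coe, mem_filter] at ht
      exact mem_erase.2 ⟨ht.2.1, mem_univ _⟩)]
  refine Finset.sum_congr rfl (fun a ha => ?_)
  have ha0 : a ≠ 0 := (mem_erase.1 ha).1
  have himg : (Nset f).filter (fun t => t.1 = a)
      = (Ma f a).image (fun p => (a, p.1, p.2)) := by
    ext ⟨a', x, y⟩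
    simp only [Nset, Ma, mem_filter, mem_univ, true_and, mem_image, Prod.mk.injEq]
    constructor
    · rintro ⟨⟨h0, heq, h1, h2⟩, rfl⟩
      exact ⟨(x, y), ⟨heq, h1, h2⟩, rfl, rfl, rfl⟩
    · rintro ⟨⟨x', y'⟩, ⟨heq, h1, h2⟩, rfl, rfl, rfl⟩
      exact ⟨⟨ha0, heq, h1, h2⟩, rfl⟩
  rw [himg, Finset.card_image_of_injective _ (by
    rintro ⟨x, y⟩ ⟨x', y'⟩ h
    simp only [Prod.mk.injEq] at h
    obtain ⟨rfl, rfl⟩ := h.2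
    rfl)]

private lemma VB_mem_VF_of_mem_Nset {f : K → K} {t : K × K × K} (ht : t ∈ Nset f) :
    ({t.2.1, t.2.1 + t.1, t.2.2, t.2.2 + t.1} : Finset K) ∈ VF f := by
  obtain ⟨a, x, y⟩ := t
  simp only [Nset, mem_filter, mem_univ, true_and] at ht
  obtain ⟨ha, heq, hyx, hya⟩ := ht
  have hadd : ∀ u : K, u + a + a = u := by
    intro u; rw [add_assoc, VB_self, add_zero]
  have h1 : x ≠ x + a := fun h => ha (by rwa [left_eq_add] at h)
  have h2 : x ≠ y := Ne.symm hyx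
  have h3 : x ≠ y + a := fun h => hya (by rw [h, hadd])
  have h4 : x + a ≠ y := Ne.symm hya
  have h5 : x + a ≠ y + a := fun h => hyx (add_right_cancel h).symm
  have h6 : y ≠ y + a := fun h => ha (by rwa [left_eq_add] at h)
  simp only [VF, mem_filter, mem_univ, true_and]
  refine ⟨VB_card_four h1 h2 h3 h4 h5 h6, ?_, ?_⟩
  · rw [VB_sum_four id h1 h2 h3 h4 h5 h6]
    simp only [id]
    rw [show x + (x + a + (y + (y + a))) = (x + x) + ((y + y) + (a + a)) by ring]
    simp [VB_self]
  · rw [VB_sum_four f h1 h2 h3 h4 h5 h6]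
    rw [show f x + (f (x + a) + (f y + f (y + a)))
        = (f (x + a) + f x) + (f (y + a) + f y) by ring, heq]
    exact VB_self _

private lemma VB_card_Q {f : K → K} {s : Finset K} (hs : s ∈ VF f) :
    (Finset.univ.filter (fun q : K × K × K =>
      q.1 ∈ s ∧ q.2.1 ∈ s ∧ q.2.2 ∈ s ∧ q.2.1 ≠ q.1 ∧ q.2.2 ≠ q.1 ∧ q.2.2 ≠ q.2.1)).card
      = 24 := by
  classical
  have hs4 : s.card = 4 := by
    simp only [VF, mem_filter] at hs; exact hs.2.1
  have hQ : (Finset.univ.filter (fun q : K × K × K =>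
      q.1 ∈ s ∧ q.2.1 ∈ s ∧ q.2.2 ∈ s ∧ q.2.1 ≠ q.1 ∧ q.2.2 ≠ q.1 ∧ q.2.2 ≠ q.2.1))
      = (s.sigma (fun x => (s.erase x).sigma (fun x' => (s.erase x).erase x'))).image
          (fun q => (q.1, q.2.1, q.2.2)) := by
    ext ⟨x, x', y⟩
    simp only [mem_filter, mem_univ, true_and, mem_image, mem_sigma, mem_erase,
      Sigma.exists, Prod.mk.injEq]
    constructor
    · rintro ⟨hx, hx', hy, h1, h2, h3⟩
      exact ⟨x, x', y, ⟨hx, ⟨h1, hx'⟩, h3, h2, hy⟩, rfl, rfl, rfl⟩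
    · rintro ⟨a, b, c, ⟨ha, ⟨hb1, hb2⟩, hc1, hc2, hc3⟩, rfl, rfl, rfl⟩
      exact ⟨ha, hb2, hc3, hb1, hc2, hc1⟩
  rw [hQ, Finset.card_image_of_injective _ (by
    rintro ⟨x, x', y⟩ ⟨a, b, c⟩ h
    simp only [Prod.mk.injEq] at h
    obtain ⟨rfl, rfl, rfl⟩ := h
    rfl)]
  rw [Finset.card_sigma]
  have hinner : ∀ x ∈ s, ((s.erase x).sigma (fun x' => (s.erase x).erase x')).card = 6 := by
    intro x hx
    rw [Finset.card_sigma]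
    have h3 : (s.erase x).card = 3 := by rw [Finset.card_erase_of_mem hx, hs4]
    have h2 : ∀ x' ∈ s.erase x, ((s.erase x).erase x').card = 2 := by
      intro x' hx'
      rw [Finset.card_erase_of_mem hx', h3]
    rw [Finset.sum_congr rfl h2, Finset.sum_const, h3, smul_eq_mul]
  rw [Finset.sum_congr rfl hinner, Finset.sum_const, hs4, smul_eq_mul]

private lemma VB_card_fiber_s {f : K → K} {s : Finset K} (hs : s ∈ VF f) :
    ((Nset f).filter (fun t : K × K × K =>
      ({t.2.1, t.2.1 + t.1, t.2.2, t.2.2 + t.1} : Finset K) = s)).card = 24 := by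
  classical
  have hsVF := hs
  simp only [VF, mem_filter, mem_univ, true_and] at hs
  obtain ⟨hs4, hsum, hsumf⟩ := hs
  have hstepA : ((Nset f).filter (fun t : K × K × K =>
      ({t.2.1, t.2.1 + t.1, t.2.2, t.2.2 + t.1} : Finset K) = s))
      = Finset.univ.filter (fun t : K × K × K =>
        ({t.2.1, t.2.1 + t.1, t.2.2, t.2.2 + t.1} : Finset K) = s) := by
    ext ⟨a, x, y⟩
    simp only [mem_filter, mem_univ, true_and, and_iff_right_iff_imp]
    intro hset
    have hc : ({x, x + a, y, y + a} : Finset K).card = 4 := by rw [hset, hs4]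
    obtain ⟨d1, d2, d3, d4, d5, d6⟩ := VB_four_distinct hc
    have ha : a ≠ 0 := by rintro rfl; exact d1 (by rw [add_zero])
    simp only [Nset, mem_filter, mem_univ, true_and]
    refine ⟨ha, ?_, Ne.symm d2, Ne.symm d4⟩
    have h0 : f x + (f (x + a) + (f y + f (y + a))) = 0 := by
      rw [← VB_sum_four f d1 d2 d3 d4 d5 d6, hset, hsumf]
    apply VB_eq_of_add_eq_zero
    rw [show (f (x + a) + f x) + (f (y + a) + f y)
        = f x + (f (x + a) + (f y + f (y + a))) by ring, h0]
  have hstepB : (Finset.univ.filter (fun t : K × K × K =>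
        ({t.2.1, t.2.1 + t.1, t.2.2, t.2.2 + t.1} : Finset K) = s))
      = (Finset.univ.filter (fun q : K × K × K =>
        q.1 ∈ s ∧ q.2.1 ∈ s ∧ q.2.2 ∈ s ∧ q.2.1 ≠ q.1 ∧ q.2.2 ≠ q.1 ∧ q.2.2 ≠ q.2.1)).image
        (fun q => (q.1 + q.2.1, q.1, q.2.2)) := by
    ext ⟨a, x, y⟩
    simp only [mem_filter, mem_univ, true_and, mem_image, Prod.mk.injEq]
    constructor
    · intro hset
      have hc : ({x, x + a, y, y + a} : Finset K).card = 4 := by rw [hset, hs4]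
      obtain ⟨d1, d2, d3, d4, d5, d6⟩ := VB_four_distinct hc
      refine ⟨(x, x + a, y), ⟨?_, ?_, ?_, Ne.symm d1, Ne.symm d2, Ne.symm d4⟩, ?_, rfl, rfl⟩
      · rw [← hset]; simp
      · rw [← hset]; simp
      · rw [← hset]; simp
      · rw [← add_assoc, VB_self, zero_add]
    · rintro ⟨⟨x0, x', y0⟩, ⟨hx, hx', hy, hx'x, hyx, hyx'⟩, rfl, rfl, rfl⟩
      dsimp only at hx hx' hy hx'x hyx hyx' ⊢
      have e1 : x0 + (x0 + x') = x' := by rw [← add_assoc, VB_self, zero_add]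
      have hymem : y0 ∈ (s.erase x0).erase x' := mem_erase.2 ⟨hyx', mem_erase.2 ⟨hyx, hy⟩⟩
      have hx'mem : x' ∈ s.erase x0 := mem_erase.2 ⟨hx'x, hx'⟩
      have hcard1 : (((s.erase x0).erase x').erase y0).card = 1 := by
        rw [Finset.card_erase_of_mem hymem, Finset.card_erase_of_mem hx'mem,
          Finset.card_erase_of_mem hx, hs4]
      obtain ⟨z, hz⟩ := Finset.card_eq_one.mp hcard1
      have hzmem : z ∈ ((s.erase x0).erase x').erase y0 := hz ▸ Finset.mem_singleton_self z
      have hzy : z ≠ y0 := (mem_erase.1 hzmem).1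
      have hzx' : z ≠ x' := (mem_erase.1 (mem_erase.1 hzmem).2).1
      have hzx : z ≠ x0 := (mem_erase.1 (mem_erase.1 (mem_erase.1 hzmem).2).2).1
      have hzs : z ∈ s := (mem_erase.1 (mem_erase.1 (mem_erase.1 hzmem).2).2).2
      have d1 : x0 ≠ x' := Ne.symm hx'x
      have d2 : x0 ≠ y0 := Ne.symm hyx
      have d3 : x0 ≠ z := Ne.symm hzx
      have d4 : x' ≠ y0 := Ne.symm hyx'
      have d5 : x' ≠ z := Ne.symm hzx'
      have d6 : y0 ≠ z := Ne.symm hzy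
      have hsub : ({x0, x', y0, z} : Finset K) ⊆ s := by
        intro t ht
        simp only [mem_insert, mem_singleton] at ht
        rcases ht with rfl | rfl | rfl | rfl <;> assumption
      have hseq : ({x0, x', y0, z} : Finset K) = s :=
        Finset.eq_of_subset_of_card_le hsub (by rw [VB_card_four d1 d2 d3 d4 d5 d6, hs4])
      have hzsum : x0 + (x' + (y0 + z)) = 0 := by
        have h4 := VB_sum_four id d1 d2 d3 d4 d5 d6
        rw [hseq, hsum] at h4
        simpa using h4.symm
      have e2 : y0 + (x0 + x') = z := by
        apply VB_eq_of_add_eq_zero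
        rw [show (y0 + (x0 + x')) + z = x0 + (x' + (y0 + z)) by ring, hzsum]
      rw [e1, e2]
      exact hseq
  rw [hstepA, hstepB, Finset.card_image_of_injOn ?inj]
  · exact VB_card_Q hsVF
  case inj =>
    rintro ⟨x, x', y⟩ - ⟨a, b, c⟩ - h
    simp only [Prod.mk.injEq] at h
    obtain ⟨h1, rfl, rfl⟩ := h
    have hx' : x' = b := by rwa [add_right_inj] at h1
    rw [hx']

private lemma VB_card_Nset_VF (f : K → K) : (Nset f).card = 24 * (VF f).card := by
  classical
  rw [Finset.card_eq_sum_card_fiberwise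
    (f := fun t : K × K × K => ({t.2.1, t.2.1 + t.1, t.2.2, t.2.2 + t.1} : Finset K))
    (t := VF f) (fun t ht => VB_mem_VF_of_mem_Nset ht)]
  rw [Finset.sum_congr rfl (fun s hs => VB_card_fiber_s hs), Finset.sum_const, smul_eq_mul,
    mul_comm]

end Aux

theorem card_vf_eq_sum_choose {K : Type*} [Field K] [Fintype K] [DecidableEq K]
    (n : ℕ) (hn : 0 < n) (hcard : Fintype.card K = 2 ^ n) [CharP K 2]
    (f : K → K) :
    3 * (VF f).card =
      ∑ a ∈ Finset.univ.erase (0 : K), ∑ b : K, Nat.choose (delta f a b / 2) 2 := by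
  classical
  have h24 : 24 * (VF f).card
      = ∑ a ∈ Finset.univ.erase (0 : K), ∑ b : K, delta f a b * (delta f a b - 2) := by
    rw [← VB_card_Nset_VF f, VB_card_Nset_sum f]
    exact Finset.sum_congr rfl (fun a ha => VB_card_Ma f (Finset.mem_erase.1 ha).1)
  have h8 : ∑ a ∈ Finset.univ.erase (0 : K), ∑ b : K, delta f a b * (delta f a b - 2)
      = 8 * ∑ a ∈ Finset.univ.erase (0 : K), ∑ b : K, Nat.choose (delta f a b / 2) 2 := by
    rw [Finset.mul_sum]
    refine Finset.sum_congr rfl (fun a ha => ?_)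
    rw [Finset.mul_sum]
    refine Finset.sum_congr rfl (fun b _ => ?_)
    have he : Even (delta f a b) := by
      rw [VB_delta_eq]
      exact VB_even_card_Dset f (Finset.mem_erase.1 ha).1 b
    exact VB_arith he
  omega
end

section
/- Let f: F_{2^n} → F_{2^n}, x ∈ F_{2^n}, a ∈ F_{2^n}*, and b = f(x+a) + f(x). Then the number of vanishing flats of f containing both x and x+a equals δ_f(a,b)/2 − 1. -/
theorem card_vf_containing_pair {K : Type*} [Field K] [Fintype K] [DecidableEq K]
    (n : ℕ) (hn : 0 < n) (hcard : Fintype.card K = 2 ^ n) [CharP K 2]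
    (f : K → K) (x a : K) (ha : a ≠ 0) :
    ((VF f).filter (fun s => x ∈ s ∧ x + a ∈ s)).card
      = delta f a (f (x + a) + f x) / 2 - 1 := by
  classical
  have h2 : (2 : K) = 0 := CharTwo.two_eq_zero
  have haa : a + a = 0 := by linear_combination a * h2
  set b := f (x + a) + f x with hb
  set D : Finset K := Finset.univ.filter (fun y => f (y + a) + f y = b) with hD
  have memD : ∀ y : K, y ∈ D ↔ f (y + a) + f y = b := by
    intro y; simp [hD]
  have hxaa : ∀ y : K, y + a + a = y := by
    intro y; rw [add_assoc, haa, add_zero]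
  have hxD : x ∈ D := by rw [memD]
  have hxaD : x + a ∈ D := by
    rw [memD, hxaa]
    linear_combination
  have hxne : x ≠ x + a := by
    intro h; exact ha (by linear_combination -h)
  set F : Finset (Finset K) := (VF f).filter (fun s => x ∈ s ∧ x + a ∈ s) with hF
  set D' : Finset K := D \ {x, x + a} with hD'
  have memD' : ∀ y : K, y ∈ D' ↔ (f (y + a) + f y = b ∧ y ≠ x ∧ y ≠ x + a) := by
    intro y; simp [hD', memD, and_comm]
  -- stability of D' under y ↦ y + a
  have hstab : ∀ y : K, y ∈ D' → y + a ∈ D' := by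
    intro y hy
    rw [memD'] at hy ⊢
    obtain ⟨h1, h2', h3⟩ := hy
    refine ⟨by rw [hxaa]; linear_combination h1, ?_, ?_⟩
    · intro h; exact h3 (by linear_combination h - a * h2)
    · intro h; exact h2' (by
        have := congrArg (· + a) h
        rw [hxaa, hxaa] at this; exact this)
  set g : K → Finset K := fun y => insert x (insert (x + a) ({y, y + a} : Finset K)) with hg
  have memg : ∀ y z : K, z ∈ g y ↔ z = x ∨ z = x + a ∨ z = y ∨ z = y + a := by
    intro y z; simp [hg]
  have hgstab : ∀ y : K, g (y + a) = g y := by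
    intro y
    ext z
    rw [memg, memg, hxaa]
    tauto
  -- structure of elements of F
  have hstruct : ∀ s ∈ F, ∃ u, u ∈ D' ∧ s = g u := by
    intro s hs
    simp only [hF, VF, Finset.mem_filter, Finset.mem_univ, true_and] at hs
    obtain ⟨⟨hc, hsum, hfsum⟩, hxs, hxas⟩ := hs
    have hsub : ({x, x + a} : Finset K) ⊆ s := by
      intro z hz
      simp only [Finset.mem_insert, Finset.mem_singleton] at hz
      rcases hz with rfl | rfl <;> assumption
    have hcp : ({x, x + a} : Finset K).card = 2 := Finset.card_pair hxne
    have hct : (s \ {x, x + a}).card = 2 := by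
      rw [Finset.card_sdiff_of_subset hsub, hc, hcp]
    obtain ⟨u, v, huv, htuv⟩ := Finset.card_eq_two.mp hct
    have hu : u ∈ s \ {x, x + a} := by rw [htuv]; simp
    have hv : v ∈ s \ {x, x + a} := by rw [htuv]; simp
    simp only [Finset.mem_sdiff, Finset.mem_insert, Finset.mem_singleton, not_or] at hu hv
    have hsplit : s = {x, x + a} ∪ (s \ {x, x + a}) := by
      rw [Finset.union_sdiff_of_subset hsub]
    have hseq : s = insert x (insert (x + a) ({u, v} : Finset K)) := by
      conv_lhs => rw [hsplit, htuv]
      ext z; simp only [Finset.mem_union, Finset.mem_insert, Finset.mem_singleton]; tauto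
    -- compute sums
    have hxnmem : x ∉ insert (x + a) ({u, v} : Finset K) := by
      simp only [Finset.mem_insert, Finset.mem_singleton, not_or]
      exact ⟨hxne, fun h => hu.2.1 h.symm, fun h => hv.2.1 h.symm⟩
    have hxanmem : x + a ∉ ({u, v} : Finset K) := by
      simp only [Finset.mem_insert, Finset.mem_singleton, not_or]
      exact ⟨fun h => hu.2.2 h.symm, fun h => hv.2.2 h.symm⟩
    have hsum' : x + (x + a + (u + v)) = 0 := by
      rw [hseq] at hsum
      rw [Finset.sum_insert hxnmem, Finset.sum_insert hxanmem, Finset.sum_pair huv] at hsum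
      exact hsum
    have hveq : v = u + a := by
      linear_combination hsum' - (x + u + a) * h2
    have hfsum' : f x + (f (x + a) + (f u + f v)) = 0 := by
      rw [hseq] at hfsum
      rw [Finset.sum_insert hxnmem, Finset.sum_insert hxanmem, Finset.sum_pair huv] at hfsum
      exact hfsum
    have huD' : u ∈ D' := by
      rw [memD']
      refine ⟨?_, hu.2.1, hu.2.2⟩
      rw [← hveq]
      linear_combination hfsum' - (f x + f (x + a)) * h2
    exact ⟨u, huD', by rw [hseq, hveq]⟩
  -- g maps D' into F
  have hgF : ∀ y ∈ D', g y ∈ F := by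
    intro y hy
    rw [memD'] at hy
    obtain ⟨h1, h2', h3⟩ := hy
    have hya : y + a ≠ x := by
      intro h; exact h3 (by
        have := congrArg (· + a) h
        rw [hxaa] at this; exact this)
    have hya2 : y + a ≠ x + a := by
      intro h; exact h2' (add_right_cancel h)
    have hyne : y ≠ y + a := by
      intro h; exact ha (by linear_combination -h)
    have hxnmem : x ∉ insert (x + a) ({y, y + a} : Finset K) := by
      simp only [Finset.mem_insert, Finset.mem_singleton, not_or]
      exact ⟨hxne, fun h => h2' h.symm, fun h => hya h.symm⟩
    have hxanmem : x + a ∉ ({y, y + a} : Finset K) := by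
      simp only [Finset.mem_insert, Finset.mem_singleton, not_or]
      exact ⟨fun h => h3 h.symm, fun h => hya2 h.symm⟩
    simp only [hF, VF, Finset.mem_filter, Finset.mem_univ, true_and]
    refine ⟨⟨?_, ?_, ?_⟩, ?_, ?_⟩
    · rw [hg]
      rw [Finset.card_insert_of_notMem hxnmem, Finset.card_insert_of_notMem hxanmem,
        Finset.card_pair hyne]
    · rw [hg]
      simp only
      rw [Finset.sum_insert hxnmem, Finset.sum_insert hxanmem, Finset.sum_pair hyne]
      simp only [id]
      linear_combination (x + y + a) * h2
    · rw [hg]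
      simp only
      rw [Finset.sum_insert hxnmem, Finset.sum_insert hxanmem, Finset.sum_pair hyne]
      linear_combination h1 + hb + (f x + f (x + a)) * h2
    · rw [memg]; tauto
    · rw [memg]; tauto
  -- fiber cardinality
  have hfiber : ∀ s ∈ F, (D'.filter (fun y => g y = s)).card = 2 := by
    intro s hs
    obtain ⟨u, huD', hseq⟩ := hstruct s hs
    have huaD' : u + a ∈ D' := hstab u huD'
    have hyne : u ≠ u + a := by
      intro h; exact ha (by linear_combination -h)
    have : D'.filter (fun y => g y = s) = {u, u + a} := by
      ext z
      simp only [Finset.mem_filter, Finset.mem_insert, Finset.mem_singleton]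
      constructor
      · rintro ⟨hz, hgz⟩
        have hzmem : z ∈ g z := by rw [memg]; tauto
        rw [hgz, hseq, memg] at hzmem
        rw [memD'] at hz
        rcases hzmem with h | h | h | h
        · exact absurd h hz.2.1
        · exact absurd h hz.2.2
        · exact Or.inl h
        · exact Or.inr h
      · rintro (rfl | rfl)
        · exact ⟨huD', hseq.symm⟩
        · exact ⟨huaD', by rw [hgstab, hseq]⟩
    rw [this, Finset.card_pair hyne]
  have hcount : D'.card = F.card * 2 := by
    rw [Finset.card_eq_sum_card_fiberwise hgF]
    exact Finset.sum_const_nat hfiber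
  have hsubD : ({x, x + a} : Finset K) ⊆ D := by
    intro z hz
    simp only [Finset.mem_insert, Finset.mem_singleton] at hz
    rcases hz with rfl | rfl <;> assumption
  have hD'card : D'.card = D.card - 2 := by
    rw [hD', Finset.card_sdiff_of_subset hsubD, Finset.card_pair hxne]
  have hDge : 2 ≤ D.card := by
    have := Finset.card_le_card hsubD
    rwa [Finset.card_pair hxne] at this
  have hdelta : delta f a b = D.card := rfl
  rw [hdelta]
  omega
end

section
/- Let f(x) = x^d be a monomial on F_{2^n} that is not APN. Then the number of vanishing flats of f is at least (2^n+1)/3 if n is odd, and at least (2^n−1)/3 if n is even. -/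
open Finset

def dirs {K : Type*} [DecidableEq K] [Add K] [Zero K] (S : Finset K) : Finset K :=
  ((S ×ˢ S).image fun p => p.1 + p.2).erase 0

lemma card_four {α : Type*} [DecidableEq α] {S : Finset α} (h : S.card = 4) :
    ∃ a b c d, a ≠ b ∧ a ≠ c ∧ a ≠ d ∧ b ≠ c ∧ b ≠ d ∧ c ≠ d ∧ S = {a, b, c, d} := by
  rw [show (4:ℕ) = 3 + 1 by rfl, Finset.card_eq_succ] at h
  obtain ⟨a, t, hat, rfl, ht⟩ := h
  obtain ⟨b, c, d, hbc, hbd, hcd, rfl⟩ := Finset.card_eq_three.mp ht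
  simp only [Finset.mem_insert, Finset.mem_singleton, not_or] at hat
  exact ⟨a, b, c, d, hat.1, hat.2.1, hat.2.2, hbc, hbd, hcd, rfl⟩

lemma dirs_card_le {K : Type*} [Field K] [DecidableEq K] [CharP K 2] {S : Finset K}
    (h4 : S.card = 4) (h0 : S.sum id = 0) : (dirs S).card ≤ 3 := by
  have h2 : (2 : K) = 0 := by exact_mod_cast CharP.cast_eq_zero K 2
  obtain ⟨a, b, c, d, hab, hac, had, hbc, hbd, hcd, rfl⟩ := card_four h4
  have hsum : a + b + c + d = 0 := by
    rw [Finset.sum_insert (by simp [hab, hac, had]),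
        Finset.sum_insert (by simp [hbc, hbd]),
        Finset.sum_insert (by simp [hcd]), Finset.sum_singleton] at h0
    simpa [add_assoc] using h0
  have hsub : dirs {a, b, c, d} ⊆ {a + b, a + c, a + d} := by
    intro z hz
    simp only [dirs, Finset.mem_erase, Finset.mem_image, Finset.mem_product] at hz
    obtain ⟨hz0, ⟨x, y⟩, ⟨hx, hy⟩, rfl⟩ := hz
    simp only [Finset.mem_insert, Finset.mem_singleton] at hx hy ⊢
    have hself : ∀ x : K, x + x = 0 := fun x => by linear_combination x * h2
    rcases hx with rfl | rfl | rfl | rfl <;> rcases hy with rfl | rfl | rfl | rfl <;>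
      first
      | exact absurd (hself _) hz0
      | exact Or.inl (by linear_combination)
      | exact Or.inl (by linear_combination hsum - (a + b) * h2)
      | exact Or.inr (Or.inl (by linear_combination))
      | exact Or.inr (Or.inl (by linear_combination hsum - (a + c) * h2))
      | exact Or.inr (Or.inr (by linear_combination))
      | exact Or.inr (Or.inr (by linear_combination hsum - (a + d) * h2))
  calc (dirs {a, b, c, d}).card ≤ ({a + b, a + c, a + d} : Finset K).card :=
        Finset.card_le_card hsub
    _ ≤ 3 := by
        apply le_trans (Finset.card_insert_le _ _)
        have := Finset.card_insert_le (a + c) ({a + d} : Finset K)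
        simp at this ⊢
        omega

lemma cover_lemma {K : Type*} [Field K] [Fintype K] [DecidableEq K] [CharP K 2]
    (d : ℕ) (hnotAPN : ∃ a b : K, a ≠ 0 ∧ 2 < delta (fun x => x ^ d) a b) :
    ∀ a : K, a ≠ 0 → ∃ S ∈ VF (fun x : K => x ^ d), a ∈ dirs S := by
  have h2 : (2 : K) = 0 := by exact_mod_cast CharP.cast_eq_zero K 2
  have hself : ∀ x : K, x + x = 0 := fun x => by linear_combination x * h2
  obtain ⟨a0, b, ha0, hδ⟩ := hnotAPN
  set f : K → K := fun x => x ^ d with hf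
  set T := Finset.univ.filter (fun x => f (x + a0) + f x = b) with hT
  have hTcard : 3 ≤ T.card := hδ
  have hTmem : ∀ x, x ∈ T ↔ f (x + a0) + f x = b := by
    intro x; simp [hT, hf, delta]
  obtain ⟨x1, hx1⟩ : T.Nonempty := Finset.card_pos.mp (by omega)
  have hx1v : f (x1 + a0) + f x1 = b := (hTmem x1).mp hx1
  have hx1' : x1 + a0 ∈ T := by
    rw [hTmem, add_assoc, hself a0, add_zero, add_comm]
    exact hx1v
  have hne1 : x1 + a0 ≠ x1 := fun h => ha0 (by linear_combination h)
  obtain ⟨x2, hx2⟩ : (T \ {x1, x1 + a0}).Nonempty := by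
    apply Finset.card_pos.mp
    have hsub : ({x1, x1 + a0} : Finset K) ⊆ T := by
      intro z hz; simp only [Finset.mem_insert, Finset.mem_singleton] at hz
      rcases hz with rfl | rfl <;> assumption
    have hc2 : ({x1, x1 + a0} : Finset K).card = 2 := by
      rw [Finset.card_insert_of_notMem (by simp [hne1.symm]), Finset.card_singleton]
    have := Finset.card_sdiff_of_subset hsub
    omega
  rw [Finset.mem_sdiff, Finset.mem_insert, Finset.mem_singleton] at hx2
  obtain ⟨hx2T, hx2ne⟩ := hx2
  push_neg at hx2ne
  obtain ⟨h21, h21'⟩ := hx2ne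
  have hx2v : f (x2 + a0) + f x2 = b := (hTmem x2).mp hx2T
  have hne2 : x2 + a0 ≠ x2 := fun h => ha0 (by linear_combination h)
  have hne3 : x2 + a0 ≠ x1 := fun h => h21' (by linear_combination h - a0 * h2)
  have hne4 : x2 + a0 ≠ x1 + a0 := fun h => h21 (by linear_combination h)
  set S0 : Finset K := {x1, x1 + a0, x2, x2 + a0} with hS0
  have m1 : x1 ∉ ({x1 + a0, x2, x2 + a0} : Finset K) := by
    simp only [Finset.mem_insert, Finset.mem_singleton]; push_neg
    exact ⟨hne1.symm, h21.symm, hne3.symm⟩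
  have m2 : x1 + a0 ∉ ({x2, x2 + a0} : Finset K) := by
    simp only [Finset.mem_insert, Finset.mem_singleton]; push_neg
    exact ⟨h21'.symm, hne4.symm⟩
  have m3 : x2 ∉ ({x2 + a0} : Finset K) := by
    simp only [Finset.mem_singleton]; exact hne2.symm
  have hS0card : S0.card = 4 := by
    rw [hS0, Finset.card_insert_of_notMem m1, Finset.card_insert_of_notMem m2,
      Finset.card_insert_of_notMem m3, Finset.card_singleton]
  have hsum0 : ∀ g : K → K, S0.sum g = g x1 + g (x1 + a0) + g x2 + g (x2 + a0) := by
    intro g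
    rw [hS0, Finset.sum_insert m1, Finset.sum_insert m2, Finset.sum_insert m3,
      Finset.sum_singleton]
    ring
  have hS0sum : S0.sum id = 0 := by
    rw [hsum0]; simp only [id]; linear_combination (x1 + x2 + a0) * h2
  have hS0f : S0.sum f = 0 := by
    rw [hsum0]; linear_combination hx1v + hx2v + b * h2
  -- scale by c = a * a0⁻¹
  intro a ha
  set c : K := a * a0⁻¹ with hc
  have hcne : c ≠ 0 := mul_ne_zero ha (inv_ne_zero ha0)
  have hca0 : c * a0 = a := by rw [hc, mul_assoc, inv_mul_cancel₀ ha0, mul_one]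
  refine ⟨S0.image (fun x => c * x), ?_, ?_⟩
  · have hinj : Function.Injective (fun x : K => c * x) := mul_right_injective₀ hcne
    rw [VF, Finset.mem_filter]
    refine ⟨Finset.mem_univ _, ?_, ?_, ?_⟩
    · rw [Finset.card_image_of_injective _ hinj, hS0card]
    · rw [Finset.sum_image (fun x _ y _ h => hinj h)]
      simp only [id]
      rw [← Finset.mul_sum, show S0.sum (fun x => x) = S0.sum id from rfl, hS0sum, mul_zero]
    · rw [Finset.sum_image (fun x _ y _ h => hinj h)]
      simp only [hf, mul_pow]
      rw [← Finset.mul_sum, show S0.sum (fun x => x ^ d) = S0.sum f from rfl, hS0f, mul_zero]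
  · rw [dirs, Finset.mem_erase]
    refine ⟨ha, ?_⟩
    rw [Finset.mem_image]
    refine ⟨(c * x1, c * (x1 + a0)), ?_, ?_⟩
    · rw [Finset.mem_product]
      constructor <;> exact Finset.mem_image_of_mem _ (by simp [hS0])
    · show c * x1 + c * (x1 + a0) = a
      linear_combination hca0 + c * x1 * h2

theorem vf_lower_bound_monomial {K : Type*} [Field K] [Fintype K] [DecidableEq K]
    (n : ℕ) (hn : 0 < n) (hcard : Fintype.card K = 2 ^ n) [CharP K 2]
    (d : ℕ) (hd : 0 < d)
    (hnotAPN : ∃ a b : K, a ≠ 0 ∧ 2 < delta (fun x => x ^ d) a b) :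
    (Odd n → 2 ^ n + 1 ≤ 3 * (VF (fun x : K => x ^ d)).card) ∧
      (Even n → 2 ^ n - 1 ≤ 3 * (VF (fun x : K => x ^ d)).card) := by
  set f : K → K := fun x => x ^ d with hf
  set V := VF f with hV
  have hkey : 2 ^ n - 1 ≤ 3 * V.card := by
    have hsub : (Finset.univ.erase (0 : K)) ⊆ V.biUnion dirs := by
      intro a ha
      rw [Finset.mem_erase] at ha
      obtain ⟨S, hS, hdS⟩ := cover_lemma d hnotAPN a ha.1
      exact Finset.mem_biUnion.mpr ⟨S, hS, hdS⟩
    have h1 : 2 ^ n - 1 ≤ (V.biUnion dirs).card := by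
      have := Finset.card_le_card hsub
      rwa [Finset.card_erase_of_mem (Finset.mem_univ _), Finset.card_univ, hcard] at this
    have h2 : (V.biUnion dirs).card ≤ ∑ S ∈ V, (dirs S).card := Finset.card_biUnion_le
    have h3 : ∑ S ∈ V, (dirs S).card ≤ 3 * V.card := by
      rw [mul_comm]
      calc ∑ S ∈ V, (dirs S).card ≤ V.card • 3 := by
            apply Finset.sum_le_card_nsmul
            intro S hS
            rw [hV, VF, Finset.mem_filter] at hS
            exact dirs_card_le hS.2.1 hS.2.2.1
        _ = V.card * 3 := by rw [smul_eq_mul]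
    omega
  have hpow : 1 ≤ 2 ^ n := Nat.one_le_two_pow
  constructor
  · intro hodd
    obtain ⟨k, rfl⟩ := hodd
    have h4 : (4 : ℕ) ^ k % 3 = 1 := by
      rw [Nat.pow_mod]; norm_num
    have hpe : (2 : ℕ) ^ (2 * k + 1) = 4 ^ k * 2 := by
      rw [pow_succ, pow_mul]; norm_num
    rw [hpe] at hkey hpow ⊢
    omega
  · intro _
    exact hkey
end

section
/- Let n be even and f(x) = x^{2^n−2} (the inverse function, with 0 ↦ 0) on F_{2^n}. Let ζ be a primitive third root of unity in F_{2^n}. Then the vanishing flats of f are exactly the sets {0, β, βζ, βζ^2} for β ∈ F_{2^n}*. In particular, |VB_{n,f}| = (2^n−1)/3. -/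
lemma VFaux_sum4 {K M : Type*} [DecidableEq K] [AddCommMonoid M] {a b c d : K}
    (hab : a ≠ b) (hac : a ≠ c) (had : a ≠ d) (hbc : b ≠ c) (hbd : b ≠ d) (hcd : c ≠ d)
    (g : K → M) : ({a,b,c,d} : Finset K).sum g = g a + g b + g c + g d := by
  rw [Finset.sum_insert (by simp [hab, hac, had]), Finset.sum_insert (by simp [hbc, hbd]),
    Finset.sum_insert (by simpa using hcd), Finset.sum_singleton]
  abel

lemma VFaux_card4 {K : Type*} [DecidableEq K] {a b c d : K}
    (hab : a ≠ b) (hac : a ≠ c) (had : a ≠ d) (hbc : b ≠ c) (hbd : b ≠ d) (hcd : c ≠ d) :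
    ({a,b,c,d} : Finset K).card = 4 := by
  rw [Finset.card_insert_of_notMem (by simp [hab, hac, had]),
    Finset.card_insert_of_notMem (by simp [hbc, hbd]),
    Finset.card_insert_of_notMem (by simpa using hcd), Finset.card_singleton]


set_option maxHeartbeats 1000000 in
theorem vf_inverse_function {K : Type*} [Field K] [Fintype K] [DecidableEq K]
    (n : ℕ) (hn : 0 < n) (hneven : Even n) (hcard : Fintype.card K = 2 ^ n) [CharP K 2]
    (ζ : K) (hζ3 : ζ ^ 3 = 1) (hζ1 : ζ ≠ 1) :
    (∀ s : Finset K,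
        s ∈ VF (fun x : K => x ^ (2 ^ n - 2)) ↔
          ∃ β : K, β ≠ 0 ∧ s = {0, β, β * ζ, β * ζ ^ 2}) ∧
      3 * (VF (fun x : K => x ^ (2 ^ n - 2))).card = 2 ^ n - 1 := by
  have htwo : (2 : K) = 0 := by exact_mod_cast CharP.cast_eq_zero K 2
  have hζ0 : ζ ≠ 0 := by intro h; rw [h] at hζ3; simp at hζ3
  have hζ2 : ζ ^ 2 + ζ + 1 = 0 := by
    have h : (ζ - 1) * (ζ ^ 2 + ζ + 1) = 0 := by linear_combination hζ3
    rcases mul_eq_zero.mp h with h | h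
    · exact absurd (sub_eq_zero.mp h) hζ1
    · exact h
  have hζ21 : ζ ^ 2 ≠ 1 := by
    intro h
    have h2 : ζ ^ 2 * ζ = 1 := by rw [← pow_succ]; exact hζ3
    rw [h, one_mul] at h2
    exact hζ1 h2
  have hζζ2 : ζ ≠ ζ ^ 2 := by
    intro h
    exact hζ1 (mul_left_cancel₀ hζ0 (show ζ * 1 = ζ * ζ by rw [mul_one, ← sq]; exact h)).symm
  have hζinv : ζ⁻¹ = ζ ^ 2 := inv_eq_of_mul_eq_one_right (by linear_combination hζ3)
  have h1ζ : 1 + ζ = ζ ^ 2 := by linear_combination hζ2 - ζ^2*htwo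
  have h1ζ2 : 1 + ζ ^ 2 = ζ := by linear_combination hζ2 - ζ*htwo
  have hn2 : 2 ≤ n := by obtain ⟨k, hk⟩ := hneven; omega
  have h4 : 4 ≤ 2 ^ n := by calc (4:ℕ) = 2^2 := by norm_num
                                _ ≤ 2^n := Nat.pow_le_pow_right (by norm_num) hn2
  have hinvpow : ∀ x : K, x ^ (2 ^ n - 2) = x⁻¹ := by
    intro x
    by_cases hx : x = 0
    · subst hx; rw [zero_pow (by omega), inv_zero]
    · have h1 := FiniteField.pow_card_sub_one_eq_one x hx
      rw [hcard] at h1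
      have h2 : x ^ (2 ^ n - 2) * x = 1 := by
        rw [← pow_succ, show 2 ^ n - 2 + 1 = 2 ^ n - 1 by omega]; exact h1
      exact eq_inv_of_mul_eq_one_left h2

  -- distinctness helpers
  have hne1 : ∀ β : K, β ≠ 0 → β ≠ β * ζ := by
    intro β hβ h
    exact hζ1 (mul_left_cancel₀ hβ (by rw [mul_one]; exact h)).symm
  have hne2 : ∀ β : K, β ≠ 0 → β ≠ β * ζ ^ 2 := by
    intro β hβ h
    exact hζ21 (mul_left_cancel₀ hβ (by rw [mul_one]; exact h)).symm
  have hne3 : ∀ β : K, β ≠ 0 → β * ζ ≠ β * ζ ^ 2 := by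
    intro β hβ h
    exact hζζ2 (mul_left_cancel₀ hβ h)
  -- the main characterization
  have hiff : ∀ s : Finset K,
      s ∈ VF (fun x : K => x ^ (2 ^ n - 2)) ↔
        ∃ β : K, β ≠ 0 ∧ s = {0, β, β * ζ, β * ζ ^ 2} := by
    intro s
    simp only [VF, Finset.mem_filter, Finset.mem_univ, true_and]
    constructor
    · rintro ⟨hcard4, hsum, hsumf⟩
      have hsumf' : ∑ x ∈ s, x⁻¹ = 0 := by
        rw [← hsumf]; exact Finset.sum_congr rfl fun x _ => (hinvpow x).symm
      by_cases h0 : (0 : K) ∈ s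
      · have ht : (s.erase 0).card = 3 := by rw [Finset.card_erase_of_mem h0, hcard4]
        obtain ⟨a, b, c, hab, hac, hbc, htabc⟩ := Finset.card_eq_three.mp ht
        have hs' : s = insert 0 ({a, b, c} : Finset K) := by
          rw [← htabc]; exact (Finset.insert_erase h0).symm
        have ha0 : a ≠ 0 := by
          have : a ∈ s.erase 0 := by rw [htabc]; simp
          exact (Finset.mem_erase.mp this).1
        have hb0 : b ≠ 0 := by
          have : b ∈ s.erase 0 := by rw [htabc]; simp
          exact (Finset.mem_erase.mp this).1
        have hc0 : c ≠ 0 := by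
          have : c ∈ s.erase 0 := by rw [htabc]; simp
          exact (Finset.mem_erase.mp this).1
        rw [hs', VFaux_sum4 (Ne.symm ha0) (Ne.symm hb0) (Ne.symm hc0) hab hac hbc] at hsum hsumf'
        have hsum2 : a + b + c = 0 := by simpa using hsum
        have hinv2 : a⁻¹ + b⁻¹ + c⁻¹ = 0 := by simpa using hsumf'
        have hcc : c = a + b := by linear_combination hsum2 - (a+b)*htwo
        have h3 : b*c + a*c + a*b = 0 := by
          field_simp at hinv2
          linear_combination hinv2
        have hquad : a^2 + a*b + b^2 = 0 := by
          linear_combination h3 - (a+b)*hcc - a*b*htwo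
        have hu : (a*b⁻¹)^2 + (a*b⁻¹) + 1 = 0 := by
          field_simp
          linear_combination hquad
        have hfac : (a*b⁻¹ - ζ) * (a*b⁻¹ - ζ^2) = 0 := by
          linear_combination hu - (a*b⁻¹)*hζ2 + hζ3
        rcases mul_eq_zero.mp hfac with h | h
        · have ha : a = b * ζ := by
            have h' : a * b⁻¹ = ζ := sub_eq_zero.mp h
            field_simp at h'
            linear_combination h'
          have hc' : c = b * ζ ^ 2 := by
            rw [hcc, ha]; linear_combination b*h1ζ
          refine ⟨b, hb0, ?_⟩
          rw [hs', ha, hc']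
          ext y; simp only [Finset.mem_insert, Finset.mem_singleton]; tauto
        · have ha : a = b * ζ ^ 2 := by
            have h' : a * b⁻¹ = ζ ^ 2 := sub_eq_zero.mp h
            field_simp at h'
            linear_combination h'
          have hc' : c = b * ζ := by
            rw [hcc, ha]; linear_combination b*h1ζ2
          refine ⟨b, hb0, ?_⟩
          rw [hs', ha, hc', Finset.insert_comm (b * ζ ^ 2) b,
            Finset.pair_comm (b * ζ ^ 2) (b * ζ)]
      · exfalso
        obtain ⟨a, ha⟩ := Finset.card_pos.mp (by rw [hcard4]; norm_num)
        have ht : (s.erase a).card = 3 := by rw [Finset.card_erase_of_mem ha, hcard4]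
        obtain ⟨b, c, d, hbc, hbd, hcd, htabc⟩ := Finset.card_eq_three.mp ht
        have hs' : s = insert a ({b, c, d} : Finset K) := by
          rw [← htabc]; exact (Finset.insert_erase ha).symm
        have hba : b ≠ a := by
          have : b ∈ s.erase a := by rw [htabc]; simp
          exact (Finset.mem_erase.mp this).1
        have hca : c ≠ a := by
          have : c ∈ s.erase a := by rw [htabc]; simp
          exact (Finset.mem_erase.mp this).1
        have hda : d ≠ a := by
          have : d ∈ s.erase a := by rw [htabc]; simp
          exact (Finset.mem_erase.mp this).1
        have ha0 : a ≠ 0 := fun h => h0 (h ▸ ha)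
        have hbmem : b ∈ s := by rw [hs']; simp
        have hcmem : c ∈ s := by rw [hs']; simp
        have hdmem : d ∈ s := by rw [hs']; simp
        have hb0 : b ≠ 0 := fun h => h0 (h ▸ hbmem)
        have hc0 : c ≠ 0 := fun h => h0 (h ▸ hcmem)
        have hd0 : d ≠ 0 := fun h => h0 (h ▸ hdmem)
        rw [hs', VFaux_sum4 (Ne.symm hba) (Ne.symm hca) (Ne.symm hda) hbc hbd hcd] at hsum hsumf'
        have hsum2 : a + b + c + d = 0 := by simpa using hsum
        have hinv2 : a⁻¹ + b⁻¹ + c⁻¹ + d⁻¹ = 0 := by simpa using hsumf'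
        have hab0 : a + b ≠ 0 := by
          intro h
          exact hba (by linear_combination h - a*htwo)
        have hcd2 : c + d = a + b := by linear_combination hsum2 - (a+b)*htwo
        have h3 : b*c*d + a*c*d + a*b*d + a*b*c = 0 := by
          field_simp at hinv2
          linear_combination hinv2
        have h5 : (a + b) * (c*d + a*b) = 0 := by
          linear_combination h3 - a*b*hcd2
        have hq : c*d + a*b = 0 := by
          rcases mul_eq_zero.mp h5 with h | h
          · exact absurd h hab0
          · exact h
        have h6 : (c + a) * (c + b) = 0 := by
          linear_combination c*hcd2 + hq + c*(a+b-d)*htwo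
        rcases mul_eq_zero.mp h6 with h | h
        · exact hca (by linear_combination h - a*htwo)
        · exact hbc (by linear_combination b*htwo - h)
    · rintro ⟨β, hβ, rfl⟩
      have d1 : (0:K) ≠ β := Ne.symm hβ
      have d2 : (0:K) ≠ β * ζ := Ne.symm (mul_ne_zero hβ hζ0)
      have d3 : (0:K) ≠ β * ζ ^ 2 := Ne.symm (mul_ne_zero hβ (pow_ne_zero 2 hζ0))
      refine ⟨VFaux_card4 d1 d2 d3 (hne1 β hβ) (hne2 β hβ) (hne3 β hβ), ?_, ?_⟩
      · rw [VFaux_sum4 d1 d2 d3 (hne1 β hβ) (hne2 β hβ) (hne3 β hβ)]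
        simp only [id_eq]
        linear_combination β*hζ2
      · rw [VFaux_sum4 d1 d2 d3 (hne1 β hβ) (hne2 β hβ) (hne3 β hβ)]
        simp only [hinvpow]
        rw [inv_zero]
        field_simp
        linear_combination hζ2
  refine ⟨hiff, ?_⟩
  -- counting
  have hmaps : ∀ x ∈ Finset.univ.filter (fun x : K => x ≠ 0),
      ({0, x, x * ζ, x * ζ ^ 2} : Finset K) ∈ VF (fun x : K => x ^ (2 ^ n - 2)) := by
    intro x hx
    rw [Finset.mem_filter] at hx
    exact (hiff _).mpr ⟨x, hx.2, rfl⟩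
  have key := Finset.card_eq_sum_card_fiberwise hmaps
  have h0filter : (Finset.univ.filter (fun x : K => x ≠ 0)).card = 2 ^ n - 1 := by
    rw [Finset.filter_ne', Finset.card_erase_of_mem (Finset.mem_univ 0), Finset.card_univ, hcard]
  have fib : ∀ t ∈ VF (fun x : K => x ^ (2 ^ n - 2)),
      ((Finset.univ.filter (fun x : K => x ≠ 0)).filter
        (fun x => ({0, x, x * ζ, x * ζ ^ 2} : Finset K) = t)).card = 3 := by
    intro t htm
    obtain ⟨β, hβ, rfl⟩ := (hiff t).mp htm
    have hset : (Finset.univ.filter (fun x : K => x ≠ 0)).filter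
        (fun x => ({0, x, x * ζ, x * ζ ^ 2} : Finset K) = {0, β, β * ζ, β * ζ ^ 2})
        = {β, β * ζ, β * ζ ^ 2} := by
      ext x
      simp only [Finset.mem_filter, Finset.mem_univ, true_and, Finset.mem_insert,
        Finset.mem_singleton]
      constructor
      · rintro ⟨hx0, hs⟩
        have hxm : x ∈ ({0, β, β * ζ, β * ζ ^ 2} : Finset K) := by
          rw [← hs]; simp
        simp only [Finset.mem_insert, Finset.mem_singleton] at hxm
        tauto
      · rintro (rfl | rfl | rfl)
        · exact ⟨hβ, rfl⟩
        · refine ⟨mul_ne_zero hβ hζ0, ?_⟩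
          have e1 : β * ζ * ζ = β * ζ ^ 2 := by ring
          have e2 : β * ζ * ζ ^ 2 = β := by linear_combination β*hζ3
          rw [e1, e2, Finset.pair_comm (β * ζ ^ 2) β, Finset.insert_comm (β * ζ) β]
        · refine ⟨mul_ne_zero hβ (pow_ne_zero 2 hζ0), ?_⟩
          have e1 : β * ζ ^ 2 * ζ = β := by linear_combination β*hζ3
          have e2 : β * ζ ^ 2 * ζ ^ 2 = β * ζ := by linear_combination β*ζ*hζ3
          rw [e1, e2, Finset.insert_comm (β * ζ ^ 2) β,
            Finset.pair_comm (β * ζ ^ 2) (β * ζ)]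
    rw [hset, Finset.card_insert_of_notMem (by simp [hne1 β hβ, hne2 β hβ]),
      Finset.card_insert_of_notMem (by simpa using hne3 β hβ), Finset.card_singleton]
  rw [h0filter, Finset.sum_congr rfl fib, Finset.sum_const, smul_eq_mul] at key
  omega
end

section
/- Let n be even, f(x) = x^{2^n−2} on F_{2^n}, and {x1,x2,x3,x4} a vanishing flat of f. Then one of the xi equals 0. -/
theorem vf_inverse_contains_zero {K : Type*} [Field K] [Fintype K] [DecidableEq K]
    (n : ℕ) (hn : 0 < n) (hneven : Even n) (hcard : Fintype.card K = 2 ^ n) [CharP K 2]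
    (x1 x2 x3 x4 : K)
    (h12 : x1 ≠ x2) (h13 : x1 ≠ x3) (h14 : x1 ≠ x4)
    (h23 : x2 ≠ x3) (h24 : x2 ≠ x4) (h34 : x3 ≠ x4)
    (hsum : x1 + x2 + x3 + x4 = 0)
    (hfsum : x1 ^ (2 ^ n - 2) + x2 ^ (2 ^ n - 2) + x3 ^ (2 ^ n - 2) + x4 ^ (2 ^ n - 2) = 0) :
    x1 = 0 ∨ x2 = 0 ∨ x3 = 0 ∨ x4 = 0 := by
  by_contra hcon
  push_neg at hcon
  obtain ⟨h1, h2, h3, h4⟩ := hcon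
  have h2n : (2:ℕ) ≤ 2 ^ n := by
    calc (2:ℕ) = 2 ^ 1 := rfl
    _ ≤ 2 ^ n := Nat.pow_le_pow_right (by norm_num) hn
  have hinv : ∀ x : K, x ≠ 0 → x ^ (2 ^ n - 2) = x⁻¹ := by
    intro x hx
    have h := FiniteField.pow_card_sub_one_eq_one x hx
    rw [hcard] at h
    have hm : x ^ (2 ^ n - 2) * x = 1 := by
      rw [← pow_succ]
      have he : 2 ^ n - 2 + 1 = 2 ^ n - 1 := by omega
      rw [he, h]
    exact eq_inv_of_mul_eq_one_left (by linear_combination hm)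
  rw [hinv x1 h1, hinv x2 h2, hinv x3 h3, hinv x4 h4] at hfsum
  have htwo : (2 : K) = 0 := by
    have := CharP.cast_eq_zero K 2
    simpa using this
  have hx4 : x4 = x1 + x2 + x3 := by
    linear_combination hsum - (x1 + x2 + x3) * htwo
  subst hx4
  field_simp at hfsum
  have key : (x1 + x2) * (x2 + x3) * (x3 + x1) = 0 := by
    linear_combination hfsum - (x1*x2*x3) * htwo
  rcases mul_eq_zero.mp key with hk | hk
  · rcases mul_eq_zero.mp hk with hk' | hk'
    · exact h12 (by linear_combination hk' - x2 * htwo)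
    · exact h23 (by linear_combination hk' - x3 * htwo)
  · exact h13 (by linear_combination hk - x3 * htwo)
end

section
/- Let f(x) = x^{2^t+1} on F_{2^n} with s = gcd(n,t). For distinct nonzero x1, x2 ∈ F_{2^n}, the set {0, x1, x2, x1+x2} is a vanishing flat of f if and only if x1/x2 ∈ F_{2^s} \ {0,1}. -/
lemma pow2_inj {K : Type*} [Field K] [CharP K 2] (j : ℕ) {a b : K}
    (h : a ^ (2:ℕ) ^ j = b ^ (2:ℕ) ^ j) : a = b := by
  haveI := Fact.mk Nat.prime_two
  induction j with
  | zero => simpa using h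
  | succ j ih =>
    apply ih
    apply frobenius_inj K 2
    simp only [frobenius_def]
    rw [pow_succ, pow_mul, pow_mul] at h
    exact h

lemma frob_fix_mul {K : Type*} [Field K] (z : K) (m k : ℕ) (h : z ^ (2:ℕ) ^ m = z) :
    z ^ (2:ℕ) ^ (m * k) = z := by
  induction k with
  | zero => simp
  | succ k ih =>
    rw [Nat.mul_succ, pow_add, pow_mul, ih, h]

lemma frob_fix_gcd {K : Type*} [Field K] [CharP K 2] (z : K) :
    ∀ m k : ℕ, z ^ (2:ℕ) ^ m = z → z ^ (2:ℕ) ^ k = z → z ^ (2:ℕ) ^ Nat.gcd m k = z := by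
  intro m k
  induction m, k using Nat.gcd.induction with
  | H0 k => intro _ h; simpa using h
  | H1 m k hm ih =>
    intro h1 h2
    rw [Nat.gcd_rec]
    apply ih _ h1
    apply pow2_inj (m * (k / m))
    have e : (2:ℕ) ^ (k % m) * 2 ^ (m * (k / m)) = (2:ℕ) ^ k := by
      rw [← pow_add]
      congr 1
      rw [Nat.add_comm, Nat.div_add_mod]
    calc (z ^ (2:ℕ) ^ (k % m)) ^ (2:ℕ) ^ (m * (k / m))
        = z ^ ((2:ℕ) ^ (k % m) * 2 ^ (m * (k / m))) := (pow_mul _ _ _).symm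
      _ = z ^ (2:ℕ) ^ k := by rw [e]
      _ = z := h2
      _ = z ^ (2:ℕ) ^ (m * (k / m)) := (frob_fix_mul z m (k / m) h1).symm

theorem vf_gold_subspace {K : Type*} [Field K] [Fintype K] [DecidableEq K]
    (n t : ℕ) (hn : 0 < n) (ht : 0 < t) (hcard : Fintype.card K = 2 ^ n) [CharP K 2]
    (x1 x2 : K) (hx1 : x1 ≠ 0) (hx2 : x2 ≠ 0) (hne : x1 ≠ x2) :
    ({0, x1, x2, x1 + x2} : Finset K) ∈ VF (fun x : K => x ^ (2 ^ t + 1)) ↔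
      ((x1 / x2) ^ (2 ^ Nat.gcd n t) = x1 / x2 ∧ x1 / x2 ≠ 0 ∧ x1 / x2 ≠ 1) := by
  have h2 : (2:K) = 0 := by exact_mod_cast CharP.cast_eq_zero K 2
  set q := 2 ^ t with hq
  have hz0 : x1 / x2 ≠ 0 := div_ne_zero hx1 hx2
  have hz1 : x1 / x2 ≠ 1 := by
    rw [Ne, div_eq_one_iff_eq hx2]; exact hne
  have hs : x1 + x2 ≠ 0 := by
    intro h
    apply hne
    rw [eq_neg_of_add_eq_zero_left h, CharTwo.neg_eq]
  have ha1 : x1 + x2 ≠ x1 := fun h => hx2 (add_left_cancel (h.trans (add_zero x1).symm))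
  have ha2 : x1 + x2 ≠ x2 := fun h => hx1 (add_right_cancel (h.trans (zero_add x2).symm))
  have h0 : (0:K) ∉ ({x1, x2, x1 + x2} : Finset K) := by
    simp only [Finset.mem_insert, Finset.mem_singleton]
    push_neg
    exact ⟨Ne.symm hx1, Ne.symm hx2, Ne.symm hs⟩
  have hm1 : x1 ∉ ({x2, x1 + x2} : Finset K) := by
    simp only [Finset.mem_insert, Finset.mem_singleton]
    push_neg
    exact ⟨hne, fun h => ha1 h.symm⟩
  have hm2 : x2 ∉ ({x1 + x2} : Finset K) := by
    simp only [Finset.mem_singleton]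
    exact fun h => ha2 h.symm
  have hcard4 : ({0, x1, x2, x1 + x2} : Finset K).card = 4 := by
    rw [Finset.card_insert_of_notMem h0, Finset.card_insert_of_notMem hm1,
      Finset.card_insert_of_notMem hm2, Finset.card_singleton]
  have hsumid : ({0, x1, x2, x1 + x2} : Finset K).sum id = 0 := by
    rw [Finset.sum_insert h0, Finset.sum_insert hm1, Finset.sum_insert hm2,
      Finset.sum_singleton]
    simp only [id]
    linear_combination (x1 + x2) * h2
  have hfr : (x1 + x2) ^ q = x1 ^ q + x2 ^ q := add_pow_char_pow ..
  have hsumf : ({0, x1, x2, x1 + x2} : Finset K).sum (fun x : K => x ^ (2 ^ t + 1))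
      = x1 ^ q * x2 + x2 ^ q * x1 := by
    rw [Finset.sum_insert h0, Finset.sum_insert hm1, Finset.sum_insert hm2,
      Finset.sum_singleton]
    rw [← hq, zero_pow (by positivity), pow_succ, pow_succ, pow_succ, hfr]
    linear_combination (x1 ^ q * x1 + x2 ^ q * x2) * h2
  have hiff : x1 ^ q * x2 + x2 ^ q * x1 = 0 ↔ (x1 / x2) ^ q = x1 / x2 := by
    rw [CharTwo.add_eq_iff_eq_add, zero_add, div_pow, div_eq_div_iff (pow_ne_zero _ hx2) hx2,
      mul_comm x1 (x2 ^ q)]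
  have hzn : (x1 / x2) ^ (2:ℕ) ^ n = x1 / x2 := by
    have := FiniteField.pow_card (x1 / x2)
    rwa [hcard] at this
  have hiff2 : (x1 / x2) ^ q = x1 / x2 ↔ (x1 / x2) ^ 2 ^ Nat.gcd n t = x1 / x2 := by
    constructor
    · intro h
      exact frob_fix_gcd (x1 / x2) n t hzn h
    · intro h
      obtain ⟨c, hc⟩ := Nat.gcd_dvd_right n t
      rw [hq, hc]
      exact frob_fix_mul _ _ c h
  simp only [VF, Finset.mem_filter, Finset.mem_univ, true_and]
  constructor
  · rintro ⟨-, -, hf⟩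
    rw [hsumf] at hf
    exact ⟨hiff2.mp (hiff.mp hf), hz0, hz1⟩
  · rintro ⟨hg, -, -⟩
    exact ⟨hcard4, hsumid, by rw [hsumf]; exact hiff.mpr (hiff2.mpr hg)⟩
end

section
/- Let f(x) = x^{2^t+1} on F_{2^n} with s = gcd(n,t) > 1. Then the number of vanishing flats of f equals 2^{n−2}(2^{s−1}−1)(2^n−1)/3. -/
section Aux

lemma fix_mul {K : Type*} [Monoid K] (c : K) (a : ℕ) (h : c ^ (2:ℕ) ^ a = c) :
    ∀ k, c ^ (2:ℕ) ^ (a * k) = c := by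
  intro k
  induction k with
  | zero => simp
  | succ k ih =>
    rw [Nat.mul_succ, pow_add, pow_mul, ih, h]

lemma fix_gcd {K : Type*} [Monoid K] (c : K) (a b : ℕ) :
    c ^ (2:ℕ) ^ a = c → c ^ (2:ℕ) ^ b = c → c ^ (2:ℕ) ^ (Nat.gcd a b) = c := by
  induction a, b using Nat.gcd.induction with
  | H0 b => intro _ hb; simpa using hb
  | H1 a b ha ih =>
    intro hA hB
    rw [Nat.gcd_rec]
    apply ih _ hA
    have hd : b = a * (b / a) + b % a := (Nat.div_add_mod b a).symm
    calc c ^ (2:ℕ) ^ (b % a) = (c ^ (2:ℕ)^(a * (b/a))) ^ (2:ℕ) ^ (b % a) := by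
          rw [fix_mul c a hA]
      _ = c := by rw [← pow_mul, ← pow_add, ← hd, hB]

open Polynomial Finset in
lemma card_fixed {K : Type*} [Field K] [Fintype K] [DecidableEq K] {n s : ℕ}
    (hcard : Fintype.card K = 2 ^ n) (hsn : s ∣ n) (hs1 : 0 < s) :
    (Finset.univ.filter fun c : K => c ^ (2:ℕ) ^ s = c).card = 2 ^ s := by
  have hn1 : 0 < n := hs1.trans_le (Nat.le_of_dvd (by
    rcases Nat.eq_zero_or_pos n with h | h
    · exfalso
      have : Fintype.card K = 1 := by rw [hcard, h]; rfl
      exact (Fintype.one_lt_card (α := K)).ne' this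
    · exact h) hsn)
  have h2s : 1 < (2:ℕ) ^ s := Nat.one_lt_pow hs1.ne' one_lt_two
  have h2n : 1 < (2:ℕ) ^ n := Nat.one_lt_pow hn1.ne' one_lt_two
  set P : K[X] := X ^ (2:ℕ) ^ s - X with hP
  set Q : K[X] := X ^ (2:ℕ) ^ n - X with hQ
  have hPne : P ≠ 0 := FiniteField.X_pow_card_sub_X_ne_zero K h2s
  have hQne : Q ≠ 0 := FiniteField.X_pow_card_sub_X_ne_zero K h2n
  have hdvdE : (2:ℕ) ^ s - 1 ∣ (2:ℕ) ^ n - 1 := by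
    obtain ⟨k, hk⟩ := hsn
    simpa [← pow_mul, ← hk] using Nat.sub_dvd_pow_sub_pow ((2:ℕ)^s) 1 k
  have hPQ : P ∣ Q := by
    have key : ∀ m : ℕ, 0 < m → (X ^ m - X : K[X]) = X * (X ^ (m-1) - 1) := by
      intro m hm
      have h1 : m - 1 + 1 = m := by omega
      rw [mul_sub, mul_one, ← pow_succ', h1]
    rw [hP, hQ, key _ (by positivity), key _ (by positivity)]
    apply mul_dvd_mul_left
    obtain ⟨k, hk⟩ := hdvdE
    simpa [← pow_mul, ← hk] using sub_dvd_pow_sub_pow ((X:K[X]) ^ ((2:ℕ)^s - 1)) 1 k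
  obtain ⟨R, hR⟩ := hPQ
  have hRne : R ≠ 0 := by rintro rfl; simp [hR] at hQne
  have hroots : Q.roots = (Finset.univ.val : Multiset K) := by
    have := FiniteField.roots_X_pow_card_sub_X K
    rwa [hcard] at this
  have hQroots : P.roots + R.roots = Finset.univ.val := by
    rw [← hroots, hR, Polynomial.roots_mul (hR ▸ hQne)]
  have hdegP : P.natDegree = 2 ^ s := FiniteField.X_pow_card_sub_X_natDegree_eq K h2s
  have hdegQ : Q.natDegree = 2 ^ n := FiniteField.X_pow_card_sub_X_natDegree_eq K h2n
  have hdegR : R.natDegree = 2 ^ n - 2 ^ s := by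
    have := hdegQ
    rw [hR, Polynomial.natDegree_mul hPne hRne, hdegP] at this
    omega
  have hcP : Multiset.card P.roots ≤ 2 ^ s := hdegP ▸ Polynomial.card_roots' P
  have hcR : Multiset.card R.roots ≤ 2 ^ n - 2 ^ s := hdegR ▸ Polynomial.card_roots' R
  have hsum : Multiset.card P.roots + Multiset.card R.roots = 2 ^ n := by
    have := congrArg Multiset.card hQroots
    simpa [hcard] using this
  have hPcard : Multiset.card P.roots = 2 ^ s := by
    have hle : (2:ℕ) ^ s ≤ 2 ^ n := Nat.pow_le_pow_right (by norm_num) (Nat.le_of_dvd hn1 hsn)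
    omega
  have hnodup : P.roots.Nodup := by
    apply Multiset.nodup_of_le (le_of_le_of_eq (Multiset.le_add_right _ _) hQroots)
    exact Finset.univ.nodup
  have hset : (Finset.univ.filter fun c : K => c ^ (2:ℕ) ^ s = c) = P.roots.toFinset := by
    ext c
    simp only [mem_filter, mem_univ, true_and, Multiset.mem_toFinset,
      Polynomial.mem_roots hPne, IsRoot.def]
    rw [hP]; simp only [eval_sub, eval_pow, eval_X, sub_eq_zero]
  rw [hset, Multiset.toFinset_card_of_nodup hnodup, hPcard]

variable {K : Type*} [Field K] [DecidableEq K] [CharP K 2]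

lemma quad_ne (x : K) {a b : K} (ha : a ≠ 0) (hb : b ≠ 0) (hab : a ≠ b) :
    x ≠ x+a ∧ x ≠ x+b ∧ x ≠ x+a+b ∧ x+a ≠ x+b ∧ x+a ≠ x+a+b ∧ x+b ≠ x+a+b := by
  have hab0 : a + b ≠ 0 := fun h => hab (by rwa [CharTwo.add_eq_iff_eq_add, zero_add] at h)
  refine ⟨by simpa using ha, by simpa using hb, ?_, by simpa using hab, by simpa using hb, ?_⟩
  · rw [add_assoc]; simpa using hab0
  · rw [show x+a+b = x+b+a by ring]; simpa using ha

lemma quad_card (x : K) {a b : K} (ha : a ≠ 0) (hb : b ≠ 0) (hab : a ≠ b) :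
    ({x, x+a, x+b, x+a+b} : Finset K).card = 4 := by
  obtain ⟨h1, h2, h3, h4, h5, h6⟩ := quad_ne x ha hb hab
  rw [Finset.card_insert_of_notMem (by simp [h1, h2, h3]),
    Finset.card_insert_of_notMem (by simp [h4, h5]),
    Finset.card_insert_of_notMem (by simp [h6]), Finset.card_singleton]

lemma quad_sum (f : K → K) (x : K) {a b : K} (ha : a ≠ 0) (hb : b ≠ 0) (hab : a ≠ b) :
    ({x, x+a, x+b, x+a+b} : Finset K).sum f = f x + f (x+a) + f (x+b) + f (x+a+b) := by
  obtain ⟨h1, h2, h3, h4, h5, h6⟩ := quad_ne x ha hb hab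
  rw [Finset.sum_insert (by simp [h1, h2, h3]), Finset.sum_insert (by simp [h4, h5]),
    Finset.sum_insert (by simp [h6]), Finset.sum_singleton]
  ring

lemma gold_sum (t : ℕ) (x a b : K) :
    x ^ (2^t+1) + (x+a) ^ (2^t+1) + (x+b) ^ (2^t+1) + (x+a+b) ^ (2^t+1)
      = a^(2^t) * b + a * b^(2^t) := by
  have h2 : (2:K) = 0 := CharTwo.two_eq_zero
  have : Fact (Nat.Prime 2) := ⟨Nat.prime_two⟩
  have frob : ∀ u v : K, (u+v)^(2^t) = u^(2^t) + v^(2^t) := fun u v =>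
    add_pow_char_pow u v 2 t
  simp only [pow_add, pow_one, frob]
  linear_combination (2*x^(2^t)*x + x^(2^t)*a + x^(2^t)*b + a^(2^t)*x + a^(2^t)*a
    + b^(2^t)*x + b^(2^t)*b) * h2

variable [Fintype K]

lemma mem_VF_iff (t : ℕ) (x : K) {a b : K} (ha : a ≠ 0) (hb : b ≠ 0) (hab : a ≠ b) :
    ({x, x+a, x+b, x+a+b} : Finset K) ∈ VF (fun x : K => x ^ (2^t+1))
      ↔ a^(2^t) * b + a * b^(2^t) = 0 := by
  have h2 : (2:K) = 0 := CharTwo.two_eq_zero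
  rw [VF, Finset.mem_filter]
  simp only [Finset.mem_univ, true_and, quad_card x ha hb hab,
    quad_sum id x ha hb hab, quad_sum _ x ha hb hab]
  have hid : x + (x+a) + (x+b) + (x+a+b) = 0 := by linear_combination (2*x+a+b)*h2
  simp only [id_eq, hid, gold_sum t x a b, true_and]

lemma vf_extract (t : ℕ) {S : Finset K} (hS : S ∈ VF (fun x : K => x ^ (2^t+1)))
    {p0 p1 p2 : K} (hm0 : p0 ∈ S) (hm1 : p1 ∈ S) (hm2 : p2 ∈ S)
    (h01 : p0 ≠ p1) (h02 : p0 ≠ p2) (h12 : p1 ≠ p2) :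
    S = {p0, p0+(p0+p1), p0+(p0+p2), p0+(p0+p1)+(p0+p2)} ∧
      (p0+p1)^(2^t) * (p0+p2) + (p0+p1) * (p0+p2)^(2^t) = 0 := by
  have h2 : (2:K) = 0 := CharTwo.two_eq_zero
  have ha : p0 + p1 ≠ 0 := fun h => h01 (by rwa [CharTwo.add_eq_iff_eq_add, zero_add] at h)
  have hb : p0 + p2 ≠ 0 := fun h => h02 (by rwa [CharTwo.add_eq_iff_eq_add, zero_add] at h)
  have hab : p0 + p1 ≠ p0 + p2 := fun h => h12 (add_left_cancel h)
  have hVFd := hS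
  rw [VF, Finset.mem_filter] at hVFd
  have hc4 : S.card = 4 := hVFd.2.1
  have hsum0 : S.sum id = 0 := hVFd.2.2.1
  have hT'card : ({p0, p1, p2} : Finset K).card = 3 := by
    rw [Finset.card_insert_of_notMem (by simp [h01, h02]),
      Finset.card_insert_of_notMem (by simp [h12]), Finset.card_singleton]
  have hT'sub : ({p0, p1, p2} : Finset K) ⊆ S := by
    intro y hy; simp only [Finset.mem_insert, Finset.mem_singleton] at hy
    rcases hy with rfl | rfl | rfl <;> assumption
  have hne : (S \ {p0, p1, p2}).Nonempty := by
    rw [← Finset.card_pos, Finset.card_sdiff_of_subset hT'sub, hc4, hT'card]; norm_num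
  obtain ⟨p3, hp3⟩ := hne
  rw [Finset.mem_sdiff, Finset.mem_insert, Finset.mem_insert, Finset.mem_singleton] at hp3
  obtain ⟨hp3S, hp3T⟩ := hp3
  push_neg at hp3T
  obtain ⟨h30, h31, h32⟩ := hp3T
  have hSeq : insert p3 ({p0, p1, p2} : Finset K) = S := by
    apply Finset.eq_of_subset_of_card_le (Finset.insert_subset hp3S hT'sub)
    rw [Finset.card_insert_of_notMem (by simp [h30, h31, h32]), hT'card, hc4]
  have hsum : p3 + (p0 + (p1 + p2)) = 0 := by
    rw [← hSeq] at hsum0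
    rw [Finset.sum_insert (by simp [h30, h31, h32]), Finset.sum_insert (by simp [h01, h02]),
      Finset.sum_insert (by simp [h12]), Finset.sum_singleton] at hsum0
    simpa using hsum0
  have hp3eq : p3 = p0 + p1 + p2 := by linear_combination hsum - (p0+p1+p2)*h2
  have e1 : p0 + (p0 + p1) = p1 := by rw [← add_assoc, CharTwo.add_self_eq_zero, zero_add]
  have e2 : p0 + (p0 + p2) = p2 := by rw [← add_assoc, CharTwo.add_self_eq_zero, zero_add]
  have e3 : p0 + (p0 + p1) + (p0 + p2) = p3 := by
    rw [hp3eq]; linear_combination p0 * h2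
  have hSform : S = {p0, p0+(p0+p1), p0+(p0+p2), p0+(p0+p1)+(p0+p2)} := by
    rw [e3, e1, e2, ← hSeq]
    ext y; simp only [Finset.mem_insert, Finset.mem_singleton]; tauto
  refine ⟨hSform, ?_⟩
  rw [hSform] at hS
  exact (mem_VF_iff t p0 ha hb hab).mp hS

end Aux

theorem card_vf_gold {K : Type*} [Field K] [Fintype K] [DecidableEq K]
    (n t : ℕ) (hn : 0 < n) (hcard : Fintype.card K = 2 ^ n) [CharP K 2]
    (hs : 1 < Nat.gcd n t) :
    3 * (VF (fun x : K => x ^ (2 ^ t + 1))).card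
      = 2 ^ (n - 2) * (2 ^ (Nat.gcd n t - 1) - 1) * (2 ^ n - 1) := by
  classical
  have h2K : (2:K) = 0 := CharTwo.two_eq_zero
  set m := Nat.gcd n t with hmdef
  have hsn : m ∣ n := Nat.gcd_dvd_left n t
  have hst : m ∣ t := Nat.gcd_dvd_right n t
  have hm2 : 2 ≤ m := hs
  have hnm : m ≤ n := Nat.le_of_dvd hn hsn
  have hn2 : 2 ≤ n := le_trans hm2 hnm
  have hfix1 : ∀ c : K, c ^ (2:ℕ)^m = c → c ^ (2:ℕ)^t = c := by
    intro c hc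
    have := fix_mul c m hc (t / m)
    rwa [Nat.mul_div_cancel' hst] at this
  have hfix2 : ∀ c : K, c ^ (2:ℕ)^t = c → c ^ (2:ℕ)^m = c := by
    intro c hc
    have hcn : c ^ (2:ℕ)^n = c := by rw [← hcard]; exact FiniteField.pow_card c
    exact fix_gcd c n t hcn hc
  set G : Finset K := Finset.univ.filter (fun c : K => c ^ (2:ℕ)^m = c) with hGdef
  have hG : G.card = 2 ^ m := card_fixed hcard hsn (by omega)
  set D : Finset K := G \ {0, 1} with hDdef
  have h01G : ({0, 1} : Finset K) ⊆ G := by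
    intro y hy
    simp only [Finset.mem_insert, Finset.mem_singleton] at hy
    rcases hy with rfl | rfl <;> simp [hGdef, zero_pow, (by positivity : (0:ℕ) < 2^m).ne']
  have hD : D.card = 2 ^ m - 2 := by
    rw [hDdef, Finset.card_sdiff_of_subset h01G, hG]
    norm_num
  set A : Finset K := Finset.univ \ {0} with hAdef
  have hA : A.card = 2 ^ n - 1 := by
    rw [hAdef, Finset.card_sdiff_of_subset (Finset.subset_univ _), Finset.card_univ, hcard,
      Finset.card_singleton]
  set T : Finset (K × K × K) := Finset.univ ×ˢ A ×ˢ D with hTdef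
  have hT : T.card = 2 ^ n * ((2 ^ n - 1) * (2 ^ m - 2)) := by
    rw [hTdef, Finset.card_product, Finset.card_product, Finset.card_univ, hcard, hA, hD]
  have hmemT : ∀ p : K × K × K, p ∈ T ↔
      (p.2.1 ≠ 0 ∧ p.2.2 ^ (2:ℕ)^m = p.2.2 ∧ p.2.2 ≠ 0 ∧ p.2.2 ≠ 1) := by
    intro p
    simp only [hTdef, Finset.mem_product, Finset.mem_univ, true_and, hAdef, hDdef, hGdef,
      Finset.mem_sdiff, Finset.mem_filter, Finset.mem_insert, Finset.mem_singleton]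
    tauto
  set φ : K × K × K → Finset K :=
    fun p => {p.1, p.1 + p.2.1, p.1 + p.2.1 * p.2.2, p.1 + p.2.1 + p.2.1 * p.2.2} with hφdef
  have hφVF : ∀ p ∈ T, φ p ∈ VF (fun x : K => x ^ (2 ^ t + 1)) := by
    rintro ⟨x, a, c⟩ hp
    obtain ⟨ha, hcG, hc0, hc1⟩ := (hmemT _).mp hp
    have hb : a * c ≠ 0 := mul_ne_zero ha hc0
    have hab : a ≠ a * c := fun h => hc1 (mul_left_cancel₀ ha (by rw [mul_one]; exact h)).symm
    refine (mem_VF_iff t x ha hb hab).mpr ?_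
    have hcq : c ^ (2:ℕ)^t = c := hfix1 c hcG
    rw [mul_pow, hcq]
    linear_combination (a^(2^t)*a*c)*h2K
  have hfib : ∀ S ∈ VF (fun x : K => x ^ (2 ^ t + 1)),
      (T.filter fun p => φ p = S).card = 24 := by
    intro S hS
    have hc4 : S.card = 4 := by
      rw [VF, Finset.mem_filter] at hS; exact hS.2.1
    set E : Finset (Σ _ : K, Σ _ : K, K) :=
      S.sigma (fun p0 => (S.erase p0).sigma (fun p1 => (S.erase p0).erase p1)) with hEdef
    have hE : E.card = 24 := by
      rw [hEdef, Finset.card_sigma]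
      have inner : ∀ p0 ∈ S,
          ((S.erase p0).sigma fun p1 => (S.erase p0).erase p1).card = 6 := by
        intro p0 h0
        have h3 : (S.erase p0).card = 3 := by rw [Finset.card_erase_of_mem h0, hc4]
        rw [Finset.card_sigma]
        rw [Finset.sum_congr rfl (fun p1 h1 => by rw [Finset.card_erase_of_mem h1, h3]),
          Finset.sum_const, h3, smul_eq_mul]
      rw [Finset.sum_congr rfl inner, Finset.sum_const, hc4, smul_eq_mul]
    rw [← hE]
    apply (Finset.card_nbij'
      (i := fun z : Σ _ : K, Σ _ : K, K =>
        ((z.1, z.1 + z.2.1, (z.1 + z.2.1)⁻¹ * (z.1 + z.2.2)) : K × K × K))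
      (j := fun p : K × K × K => (⟨p.1, p.1 + p.2.1, p.1 + p.2.1 * p.2.2⟩ : Σ _ : K, Σ _ : K, K))
      ?_ ?_ ?_ ?_).symm
    · -- i maps E into fiber
      rintro ⟨p0, p1, p2⟩ hz
      simp only [Finset.mem_coe, hEdef, Finset.mem_sigma, Finset.mem_erase] at hz
      obtain ⟨hm0, ⟨h10, hm1⟩, h21, h20, hm2⟩ := hz
      obtain ⟨hSform, hcond⟩ := vf_extract t hS hm0 hm1 hm2 h10.symm h20.symm (Ne.symm h21)
      have ha : p0 + p1 ≠ 0 := fun h =>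
        h10 (by rwa [CharTwo.add_eq_iff_eq_add, zero_add, eq_comm] at h)
      have hb : p0 + p2 ≠ 0 := fun h =>
        h20 (by rwa [CharTwo.add_eq_iff_eq_add, zero_add, eq_comm] at h)
      have hab : p0 + p1 ≠ p0 + p2 := fun h => h21 (add_left_cancel h).symm
      have hac : (p0 + p1) * ((p0 + p1)⁻¹ * (p0 + p2)) = p0 + p2 := by
        rw [← mul_assoc, mul_inv_cancel₀ ha, one_mul]
      have hc0 : (p0 + p1)⁻¹ * (p0 + p2) ≠ 0 := mul_ne_zero (inv_ne_zero ha) hb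
      have hc1 : (p0 + p1)⁻¹ * (p0 + p2) ≠ 1 := fun h => hab (by rw [← hac, h, mul_one])
      have haqb : (p0+p1)^(2^t) * (p0+p2) = (p0+p1) * (p0+p2)^(2^t) := by
        linear_combination hcond - ((p0+p1) * (p0+p2)^(2^t))*h2K
      have hqa : (p0+p1)^(2^t) ≠ 0 := pow_ne_zero _ ha
      have hcq : ((p0 + p1)⁻¹ * (p0 + p2)) ^ (2:ℕ)^t = (p0 + p1)⁻¹ * (p0 + p2) := by
        calc ((p0+p1)⁻¹ * (p0+p2))^(2^t)
            = ((p0+p1)^(2^t))⁻¹ * (p0+p2)^(2^t) := by rw [mul_pow, inv_pow]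
          _ = ((p0+p1)^(2^t))⁻¹ * ((p0+p1)⁻¹ * ((p0+p1) * (p0+p2)^(2^t))) := by
              rw [inv_mul_cancel_left₀ ha]
          _ = ((p0+p1)^(2^t))⁻¹ * ((p0+p1)⁻¹ * ((p0+p1)^(2^t) * (p0+p2))) := by
              rw [← haqb]
          _ = (p0+p1)⁻¹ * (p0+p2) := by
              rw [mul_left_comm, inv_mul_cancel_left₀ hqa]
      have hcG : ((p0 + p1)⁻¹ * (p0 + p2)) ^ (2:ℕ)^m = (p0 + p1)⁻¹ * (p0 + p2) :=
        hfix2 _ hcq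
      rw [Finset.mem_coe, Finset.mem_filter]
      constructor
      · exact (hmemT _).mpr ⟨ha, hcG, hc0, hc1⟩
      · show φ (p0, p0 + p1, (p0 + p1)⁻¹ * (p0 + p2)) = S
        rw [hφdef]
        simp only [hac]
        exact hSform.symm
    · -- j maps fiber into E
      rintro ⟨x, a, c⟩ hp
      rw [Finset.mem_coe, Finset.mem_filter] at hp
      obtain ⟨hpT, hφS⟩ := hp
      obtain ⟨ha, hcG, hc0, hc1⟩ := (hmemT _).mp hpT
      have hb : a * c ≠ 0 := mul_ne_zero ha hc0
      have hmem : ∀ y ∈ φ (x, a, c), y ∈ S := fun y hy => hφS ▸ hy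
      simp only [Finset.mem_coe, hEdef, Finset.mem_sigma, Finset.mem_erase]
      refine ⟨?_, ⟨?_, ?_⟩, ?_, ?_, ?_⟩
      · exact hmem x (by simp [hφdef])
      · simpa using ha
      · exact hmem (x + a) (by simp [hφdef])
      · intro h
        apply hc1
        apply mul_left_cancel₀ ha
        rw [mul_one]
        first
          | exact add_left_cancel h
          | exact (add_left_cancel h).symm
      · simpa using hb
      · exact hmem (x + a * c) (by simp [hφdef])
    · -- left inverse
      rintro ⟨p0, p1, p2⟩ hz
      simp only [Finset.mem_coe, hEdef, Finset.mem_sigma, Finset.mem_erase] at hz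
      obtain ⟨hm0, ⟨h10, hm1⟩, h21, h20, hm2⟩ := hz
      have ha : p0 + p1 ≠ 0 := fun h =>
        h10 (by rwa [CharTwo.add_eq_iff_eq_add, zero_add, eq_comm] at h)
      have e1 : p0 + (p0 + p1) = p1 := by rw [← add_assoc, CharTwo.add_self_eq_zero, zero_add]
      have e2 : p0 + (p0 + p1) * ((p0 + p1)⁻¹ * (p0 + p2)) = p2 := by
        rw [← mul_assoc, mul_inv_cancel₀ ha, one_mul, ← add_assoc,
          CharTwo.add_self_eq_zero, zero_add]
      show (⟨p0, p0 + (p0 + p1), p0 + (p0 + p1) * ((p0 + p1)⁻¹ * (p0 + p2))⟩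
          : Σ _ : K, Σ _ : K, K) = ⟨p0, p1, p2⟩
      rw [e1, e2]
    · -- right inverse
      rintro ⟨x, a, c⟩ hp
      rw [Finset.mem_coe, Finset.mem_filter] at hp
      obtain ⟨ha, _, _, _⟩ := (hmemT _).mp hp.1
      have e1 : x + (x + a) = a := by rw [← add_assoc, CharTwo.add_self_eq_zero, zero_add]
      have e2 : x + (x + a * c) = a * c := by
        rw [← add_assoc, CharTwo.add_self_eq_zero, zero_add]
      show ((x, x + (x + a), (x + (x + a))⁻¹ * (x + (x + a * c)))) = ((x, a, c) : K × K × K)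
      rw [e1, e2, inv_mul_cancel_left₀ ha]
  have hcount : T.card = (VF (fun x : K => x ^ (2 ^ t + 1))).card * 24 := by
    rw [Finset.card_eq_sum_card_fiberwise hφVF, Finset.sum_congr rfl hfib,
      Finset.sum_const, smul_eq_mul]
  have key : (VF (fun x : K => x ^ (2 ^ t + 1))).card * 24
      = 2 ^ n * ((2 ^ n - 1) * (2 ^ m - 2)) := by rw [← hcount, hT]
  have e2n : (2:ℕ) ^ n = 4 * 2 ^ (n - 2) := by
    rw [show (4:ℕ) = 2^2 by norm_num, ← pow_add]
    congr 1
    omega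
  have e2m : (2:ℕ) ^ m = 2 * 2 ^ (m - 1) := by
    rw [← pow_succ']
    congr 1
    omega
  have ha1 : 1 ≤ (2:ℕ) ^ (n - 2) := Nat.one_le_two_pow
  have hb1 : 1 ≤ (2:ℕ) ^ (m - 1) := Nat.one_le_two_pow
  apply Nat.eq_of_mul_eq_mul_left (show 0 < 8 by norm_num)
  rw [← mul_assoc, show 8 * 3 = 24 by norm_num, mul_comm 24 _, key, e2n, e2m]
  have h4a : (1:ℕ) ≤ 2 ^ (n-2) * 4 := Nat.one_le_iff_ne_zero.mpr (by positivity)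
  have h4a' : (1:ℕ) ≤ 4 * 2 ^ (n-2) := Nat.one_le_iff_ne_zero.mpr (by positivity)
  have h2b : (2:ℕ) ≤ 2 ^ (m-1) * 2 := Nat.le_mul_of_pos_left 2 (by positivity)
  have h2b' : (2:ℕ) ≤ 2 * 2 ^ (m-1) := Nat.le_mul_of_pos_right 2 (by positivity)
  zify [ha1, hb1, h4a, h4a', h2b, h2b']
  ring
end

section
/- Let f(x) = Σ_{0 ≤ i < j < n} c_{ij} x^{2^i+2^j} be a DO polynomial over F_{2^n} and x1, x2 ∈ F_{2^n} distinct and nonzero with x1 ≠ x2. Then for every a ∈ F_{2^n}, the set {a, x1+a, x2+a, x1+x2+a} is a vanishing flat of f if and only if Σ_{0 ≤ i < j < n} c_{ij}(x1^{2^i} x2^{2^j} + x1^{2^j} x2^{2^i}) = 0. -/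
lemma key_mono {K : Type*} [Field K] [CharP K 2] (i j : ℕ) (x1 x2 a : K) :
    a ^ (2 ^ i + 2 ^ j) + (x1 + a) ^ (2 ^ i + 2 ^ j) + (x2 + a) ^ (2 ^ i + 2 ^ j)
      + (x1 + x2 + a) ^ (2 ^ i + 2 ^ j)
    = x1 ^ 2 ^ i * x2 ^ 2 ^ j + x1 ^ 2 ^ j * x2 ^ 2 ^ i := by
  have h2 : (2 : K) = 0 := CharTwo.two_eq_zero
  simp only [pow_add, add_pow_char_pow]
  linear_combination (2*a^2^i*a^2^j + x1^2^i*x1^2^j + x2^2^i*x2^2^j + x1^2^i*a^2^j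
    + x2^2^i*a^2^j + a^2^i*x1^2^j + a^2^i*x2^2^j) * h2

theorem vf_DO_criterion {K : Type*} [Field K] [Fintype K] [DecidableEq K]
    (n : ℕ) (hn : 0 < n) (hcard : Fintype.card K = 2 ^ n) [CharP K 2]
    (c : ℕ → ℕ → K) (f : K → K)
    (hf : ∀ x : K, f x = ∑ i ∈ Finset.range n, ∑ j ∈ Finset.range n,
      if i < j then c i j * x ^ (2 ^ i + 2 ^ j) else 0)
    (x1 x2 : K) (hx1 : x1 ≠ 0) (hx2 : x2 ≠ 0) (hne : x1 ≠ x2) (a : K) :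
    ({a, x1 + a, x2 + a, x1 + x2 + a} : Finset K) ∈ VF f ↔
      ∑ i ∈ Finset.range n, ∑ j ∈ Finset.range n,
        (if i < j then c i j * (x1 ^ 2 ^ i * x2 ^ 2 ^ j + x1 ^ 2 ^ j * x2 ^ 2 ^ i) else 0)
        = 0 := by
  have h2 : (2 : K) = 0 := CharTwo.two_eq_zero
  have h12 : x1 + x2 ≠ 0 := fun h => hne (by linear_combination h - x2 * h2)
  have d1 : a ≠ x1 + a := fun h => hx1 (by linear_combination -h)
  have d2 : a ≠ x2 + a := fun h => hx2 (by linear_combination -h)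
  have d3 : a ≠ x1 + x2 + a := fun h => h12 (by linear_combination -h)
  have d4 : x1 + a ≠ x2 + a := fun h => hne (by linear_combination h)
  have d5 : x1 + a ≠ x1 + x2 + a := fun h => hx2 (by linear_combination -h)
  have d6 : x2 + a ≠ x1 + x2 + a := fun h => hx1 (by linear_combination -h)
  have hm1 : a ∉ ({x1 + a, x2 + a, x1 + x2 + a} : Finset K) := by
    simp [d1, d2, d3]
  have hm2 : x1 + a ∉ ({x2 + a, x1 + x2 + a} : Finset K) := by
    simp [d4, d5]
  have hm3 : x2 + a ∉ ({x1 + x2 + a} : Finset K) := by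
    simp [d6]
  have hsum : ∀ g : K → K,
      ({a, x1 + a, x2 + a, x1 + x2 + a} : Finset K).sum g
        = g a + g (x1 + a) + g (x2 + a) + g (x1 + x2 + a) := by
    intro g
    rw [Finset.sum_insert hm1, Finset.sum_insert hm2, Finset.sum_insert hm3,
      Finset.sum_singleton]
    ring
  have hc : ({a, x1 + a, x2 + a, x1 + x2 + a} : Finset K).card = 4 := by
    rw [Finset.card_insert_of_notMem hm1, Finset.card_insert_of_notMem hm2,
      Finset.card_insert_of_notMem hm3, Finset.card_singleton]
  have hid : ({a, x1 + a, x2 + a, x1 + x2 + a} : Finset K).sum id = 0 := by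
    rw [hsum]
    simp only [id]
    linear_combination (x1 + x2 + 2 * a) * h2
  have hfs : ({a, x1 + a, x2 + a, x1 + x2 + a} : Finset K).sum f
      = ∑ i ∈ Finset.range n, ∑ j ∈ Finset.range n,
        (if i < j then c i j * (x1 ^ 2 ^ i * x2 ^ 2 ^ j + x1 ^ 2 ^ j * x2 ^ 2 ^ i) else 0) := by
    rw [hsum, hf, hf, hf, hf, ← Finset.sum_add_distrib, ← Finset.sum_add_distrib,
      ← Finset.sum_add_distrib]
    refine Finset.sum_congr rfl fun i _ => ?_
    rw [← Finset.sum_add_distrib, ← Finset.sum_add_distrib, ← Finset.sum_add_distrib]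
    refine Finset.sum_congr rfl fun j _ => ?_
    split_ifs with hij
    · rw [← mul_add, ← mul_add, ← mul_add, key_mono]
    · ring
  simp only [VF, Finset.mem_filter, Finset.mem_univ, true_and, hc, hid, hfs, and_true,
    true_and, eq_self_iff_true]
end

section
/- Let f be a DO polynomial over F_{2^n}, and for a ∈ F_{2^n}* let L_{f,a}(x) = f(x+a) + f(x) + f(a), an F_2-linear map, with rank h_a (so its image has size 2^{h_a}). Then the number of vanishing flats of f equals (2^{n−2}/3) · Σ_{a ∈ F_{2^n}*} (2^{n−h_a−1} − 1). -/
set_option linter.unusedSectionVars false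

open Finset

section Aux
variable {K : Type*} [Field K] [Fintype K] [DecidableEq K]

lemma quad_sum_s17 {M : Type*} [AddCommMonoid M] (F : K → M) (a b c d : K)
    (h1 : a ≠ b) (h2 : a ≠ c) (h3 : a ≠ d) (h4 : b ≠ c) (h5 : b ≠ d) (h6 : c ≠ d) :
    ({a,b,c,d} : Finset K).sum F = F a + (F b + (F c + F d)) := by
  rw [Finset.sum_insert (by simp [h1,h2,h3]), Finset.sum_insert (by simp [h4,h5]),
    Finset.sum_insert (by simp [h6]), Finset.sum_singleton]

lemma quad_card_s17 (a b c d : K)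
    (h1 : a ≠ b) (h2 : a ≠ c) (h3 : a ≠ d) (h4 : b ≠ c) (h5 : b ≠ d) (h6 : c ≠ d) :
    ({a,b,c,d} : Finset K).card = 4 := by
  rw [Finset.card_insert_of_notMem (by simp [h1,h2,h3]),
    Finset.card_insert_of_notMem (by simp [h4,h5]),
    Finset.card_insert_of_notMem (by simp [h6]), Finset.card_singleton]

variable [CharP K 2]

-- the bilinear-type form
lemma DO_bilinear (n : ℕ) (c : ℕ → ℕ → K) (f : K → K)
    (hf : ∀ x : K, f x = ∑ i ∈ Finset.range n, ∑ j ∈ Finset.range n,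
      if i < j then c i j * x ^ (2 ^ i + 2 ^ j) else 0) (x a : K) :
    f (x + a) + f x + f a = ∑ i ∈ Finset.range n, ∑ j ∈ Finset.range n,
      if i < j then c i j * (x ^ (2^i) * a ^ (2^j) + x ^ (2^j) * a ^ (2^i)) else 0 := by
  rw [hf (x+a), hf x, hf a, ← Finset.sum_add_distrib, ← Finset.sum_add_distrib]
  refine Finset.sum_congr rfl fun i _ => ?_
  rw [← Finset.sum_add_distrib, ← Finset.sum_add_distrib]
  refine Finset.sum_congr rfl fun j _ => ?_
  split_ifs with hij
  · rw [pow_add, pow_add, pow_add, add_pow_char_pow x a 2 i, add_pow_char_pow x a 2 j]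
    linear_combination (c i j * x^(2^i)*x^(2^j) + c i j * a^(2^i)*a^(2^j)) *
      (CharTwo.two_eq_zero (R := K))
  · simp

lemma DO_f0 (n : ℕ) (c : ℕ → ℕ → K) (f : K → K)
    (hf : ∀ x : K, f x = ∑ i ∈ Finset.range n, ∑ j ∈ Finset.range n,
      if i < j then c i j * x ^ (2 ^ i + 2 ^ j) else 0) : f 0 = 0 := by
  rw [hf]
  refine Finset.sum_eq_zero fun i _ => Finset.sum_eq_zero fun j _ => ?_
  split_ifs
  · rw [zero_pow (by positivity), mul_zero]
  · rfl

lemma DO_additive (n : ℕ) (c : ℕ → ℕ → K) (f : K → K)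
    (hf : ∀ x : K, f x = ∑ i ∈ Finset.range n, ∑ j ∈ Finset.range n,
      if i < j then c i j * x ^ (2 ^ i + 2 ^ j) else 0) (a x y : K) :
    (f (x + y + a) + f (x + y) + f a) = (f (x + a) + f x + f a) + (f (y + a) + f y + f a) := by
  rw [DO_bilinear n c f hf (x+y) a, DO_bilinear n c f hf x a, DO_bilinear n c f hf y a,
    ← Finset.sum_add_distrib]
  refine Finset.sum_congr rfl fun i _ => ?_
  rw [← Finset.sum_add_distrib]
  refine Finset.sum_congr rfl fun j _ => ?_
  split_ifs with hij
  · rw [add_pow_char_pow x y 2 i, add_pow_char_pow x y 2 j]; ring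
  · simp

end Aux

section Count
variable {K : Type*} [Field K] [Fintype K] [DecidableEq K] [CharP K 2]

set_option linter.unusedSectionVars false

-- fibers of an additive map all have kernel size
lemma ker_mul (g : K → K) (hadd : ∀ x y, g (x + y) = g x + g y) :
    (univ.image g).card * (univ.filter (fun x => g x = 0)).card = Fintype.card K := by
  have hfib : ∀ b ∈ univ.image g, (univ.filter (fun x => g x = b)).card
      = (univ.filter (fun x => g x = 0)).card := by
    intro b hb
    obtain ⟨x0, -, hx0⟩ := Finset.mem_image.mp hb
    refine Finset.card_nbij' (fun x => x + x0) (fun x => x + x0) ?_ ?_ ?_ ?_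
    · intro x hx
      simp only [Finset.mem_coe, Finset.mem_filter, Finset.mem_univ, true_and] at hx ⊢
      rw [hadd, hx, hx0, CharTwo.add_self_eq_zero]
    · intro x hx
      simp only [Finset.mem_coe, Finset.mem_filter, Finset.mem_univ, true_and] at hx ⊢
      rw [hadd, hx, hx0, zero_add]
    · intro x _; simp only []
      rw [add_assoc, CharTwo.add_self_eq_zero, add_zero]
    · intro x _; simp only []
      rw [add_assoc, CharTwo.add_self_eq_zero, add_zero]
  have := Finset.card_eq_sum_card_image g (univ : Finset K)
  rw [Finset.sum_congr rfl hfib, Finset.sum_const, smul_eq_mul] at this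
  rw [← this, Finset.card_univ]

lemma pairs_card (g : K → K) (hadd : ∀ x y, g (x + y) = g x + g y) :
    ((univ ×ˢ univ).filter (fun p : K × K => g p.1 = g p.2)).card
      = Fintype.card K * (univ.filter (fun x => g x = 0)).card := by
  rw [← Finset.card_univ, ← Finset.card_product]
  refine Finset.card_nbij' (fun p => (p.1, p.1 + p.2)) (fun p => (p.1, p.1 + p.2)) ?_ ?_ ?_ ?_
  · intro p hp
    simp only [Finset.mem_coe, Finset.mem_filter, Finset.mem_product, Finset.mem_univ, true_and] at hp ⊢
    rw [hadd, ← hp, CharTwo.add_self_eq_zero]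
  · intro p hp
    simp only [Finset.mem_coe, Finset.mem_filter, Finset.mem_product, Finset.mem_univ, true_and] at hp ⊢
    rw [hadd, hp, add_zero]
  · intro p _
    simp only [Prod.mk.injEq, true_and]
    rw [← add_assoc, CharTwo.add_self_eq_zero, zero_add]

  · intro p _
    simp only [Prod.mk.injEq, true_and]
    rw [← add_assoc, CharTwo.add_self_eq_zero, zero_add]


end Count
open Finset

lemma orderings_card {K : Type*} [DecidableEq K] [Fintype K] (s : Finset K) (hs4 : s.card = 4) :
    ((univ : Finset (K × K × K × K)).filter (fun q =>
        (q.1 ≠ q.2.1 ∧ q.1 ≠ q.2.2.1 ∧ q.1 ≠ q.2.2.2 ∧ q.2.1 ≠ q.2.2.1 ∧ q.2.1 ≠ q.2.2.2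
          ∧ q.2.2.1 ≠ q.2.2.2)
        ∧ ({q.1, q.2.1, q.2.2.1, q.2.2.2} : Finset K) = s)).card = 24 := by
  have hcards : Fintype.card ↥s = 4 := by rw [Fintype.card_coe, hs4]
  let e0 : Fin 4 ≃ ↥s := (Fintype.equivFinOfCardEq hcards).symm
  set v : Fin 4 → K := fun i => ((e0 i : K)) with hv_def
  have hv : Function.Injective v := fun i j hij => e0.injective (Subtype.ext hij)
  have hvmem : ∀ i, v i ∈ s := fun i => (e0 i).2
  set Φ : Equiv.Perm (Fin 4) → K × K × K × K :=
    fun σ => (v (σ 0), v (σ 1), v (σ 2), v (σ 3)) with hΦ_def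
  have hΦinj : Function.Injective Φ := by
    intro σ τ hστ
    simp only [hΦ_def, Prod.mk.injEq] at hστ
    ext i
    fin_cases i
    · exact congrArg Fin.val (hv hστ.1)
    · exact congrArg Fin.val (hv hστ.2.1)
    · exact congrArg Fin.val (hv hστ.2.2.1)
    · exact congrArg Fin.val (hv hστ.2.2.2)
  have hset : ∀ w : Fin 4 → K, Function.Injective w → (∀ i, w i ∈ s) →
      ({w 0, w 1, w 2, w 3} : Finset K) = s := by
    intro w hw hwm
    refine Finset.eq_of_subset_of_card_le ?_ ?_
    · intro z hz
      simp only [Finset.mem_insert, Finset.mem_singleton] at hz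
      rcases hz with h|h|h|h <;> (subst h; apply hwm)
    · rw [hs4]
      have : ({w 0, w 1, w 2, w 3} : Finset K).card = 4 := by
        rw [Finset.card_insert_of_notMem (by
            simp only [Finset.mem_insert, Finset.mem_singleton]
            push_neg
            exact ⟨fun h => (by decide : (0:Fin 4) ≠ 1) (hw h),
              fun h => (by decide : (0:Fin 4) ≠ 2) (hw h),
              fun h => (by decide : (0:Fin 4) ≠ 3) (hw h)⟩),
          Finset.card_insert_of_notMem (by
            simp only [Finset.mem_insert, Finset.mem_singleton]
            push_neg
            exact ⟨fun h => (by decide : (1:Fin 4) ≠ 2) (hw h),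
              fun h => (by decide : (1:Fin 4) ≠ 3) (hw h)⟩),
          Finset.card_insert_of_notMem (by
            simp only [Finset.mem_singleton]
            exact fun h => (by decide : (2:Fin 4) ≠ 3) (hw h)),
          Finset.card_singleton]
      omega
  have hmain : (univ : Finset (K × K × K × K)).filter (fun q =>
        (q.1 ≠ q.2.1 ∧ q.1 ≠ q.2.2.1 ∧ q.1 ≠ q.2.2.2 ∧ q.2.1 ≠ q.2.2.1 ∧ q.2.1 ≠ q.2.2.2
          ∧ q.2.2.1 ≠ q.2.2.2)
        ∧ ({q.1, q.2.1, q.2.2.1, q.2.2.2} : Finset K) = s)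
      = Finset.image Φ univ := by
    ext q
    simp only [Finset.mem_filter, Finset.mem_univ, true_and, Finset.mem_image]
    constructor
    · rintro ⟨⟨h12, h13, h14, h23, h24, h34⟩, hqs⟩
      have hu : Function.Injective (![q.1, q.2.1, q.2.2.1, q.2.2.2]) := by
        intro i j hij
        fin_cases i <;> fin_cases j <;> simp_all
      set u : Fin 4 → K := ![q.1, q.2.1, q.2.2.1, q.2.2.2] with hu_def
      have humem : ∀ i, u i ∈ s := by
        intro i
        rw [← hqs]
        fin_cases i <;> simp [hu_def]
      have hrange : Set.range u = Set.range v := by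
        have h1 : Set.range u = ↑s := by
          apply Set.eq_of_subset_of_subset
          · rintro z ⟨i, rfl⟩; exact humem i
          · intro z hz
            rw [← hqs] at hz
            simp only [Finset.coe_insert, Set.mem_insert_iff, Finset.coe_singleton,
              Set.mem_singleton_iff] at hz
            rcases hz with h|h|h|h
            · exact ⟨0, by simp [hu_def, h]⟩
            · exact ⟨1, by simp [hu_def, h]⟩
            · exact ⟨2, by simp [hu_def, h]⟩
            · exact ⟨3, by simp [hu_def, h]⟩
        have h2 : Set.range v = ↑s := by
          apply Set.eq_of_subset_of_subset
          · rintro z ⟨i, rfl⟩; exact hvmem i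
          · intro z hz
            exact ⟨e0.symm ⟨z, hz⟩, by simp [hv_def]⟩
        rw [h1, h2]
      refine ⟨(Equiv.ofInjective u hu).trans
        ((Equiv.setCongr hrange).trans (Equiv.ofInjective v hv).symm), ?_⟩
      have key : ∀ i, v (((Equiv.ofInjective u hu).trans
          ((Equiv.setCongr hrange).trans (Equiv.ofInjective v hv).symm)) i) = u i := by
        intro i
        simp only [Equiv.trans_apply]
        rw [Equiv.apply_ofInjective_symm hv]
        rfl
      have hq4 : q = (q.1, q.2.1, q.2.2.1, q.2.2.2) := rfl
      rw [hΦ_def]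
      simp only [key]
      rw [hq4]
      simp [hu_def]
    · rintro ⟨σ, rfl⟩
      have hne : ∀ i j : Fin 4, i ≠ j → v (σ i) ≠ v (σ j) :=
        fun i j hij hEq => hij (σ.injective (hv hEq))
      refine ⟨⟨hne 0 1 (by decide), hne 0 2 (by decide), hne 0 3 (by decide),
        hne 1 2 (by decide), hne 1 3 (by decide), hne 2 3 (by decide)⟩, ?_⟩
      exact hset (fun i => v (σ i)) (fun i j hij => σ.injective (hv hij)) (fun i => hvmem _)
  rw [hmain, Finset.card_image_of_injective _ hΦinj, Finset.card_univ, Fintype.card_perm,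
    Fintype.card_fin]
  decide

theorem card_vf_DO {K : Type*} [Field K] [Fintype K] [DecidableEq K]
    (n : ℕ) (hn : 2 ≤ n) (hcard : Fintype.card K = 2 ^ n) [CharP K 2]
    (c : ℕ → ℕ → K) (f : K → K)
    (hf : ∀ x : K, f x = ∑ i ∈ Finset.range n, ∑ j ∈ Finset.range n,
      if i < j then c i j * x ^ (2 ^ i + 2 ^ j) else 0)
    (h : K → ℕ)
    (hrank : ∀ a : K, a ≠ 0 →
      (Finset.univ.image (fun x : K => f (x + a) + f x + f a)).card = 2 ^ h a) :
    3 * (VF f).card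
      = 2 ^ (n - 2) * ∑ a ∈ Finset.univ.erase (0 : K), (2 ^ (n - h a - 1) - 1) := by
  classical
  set g : K → K → K := fun a x => f (x + a) + f x + f a with hg_def
  have two0 : (2 : K) = 0 := CharTwo.two_eq_zero
  have hgadd : ∀ a x y, g a (x + y) = g a x + g a y := fun a x y => DO_additive n c f hf a x y
  have hf0 : f 0 = 0 := DO_f0 n c f hf
  have hgaa : ∀ a, g a a = 0 := by
    intro a
    simp only [hg_def, CharTwo.add_self_eq_zero a, hf0, zero_add]
    exact CharTwo.add_self_eq_zero _
  -- kernel cardinality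
  have hker : ∀ a : K, a ≠ 0 →
      (univ.filter (fun x => g a x = 0)).card = 2 ^ (n - h a) ∧ 1 ≤ n - h a := by
    intro a ha
    have hmul := ker_mul (g a) (hgadd a)
    rw [hcard] at hmul
    have himg : (univ.image (g a)).card = 2 ^ h a := hrank a ha
    rw [himg] at hmul
    have hker2 : 2 ≤ (univ.filter (fun x => g a x = 0)).card := by
      have hsub : ({0, a} : Finset K) ⊆ univ.filter (fun x => g a x = 0) := by
        intro z hz
        simp only [Finset.mem_insert, Finset.mem_singleton] at hz
        rcases hz with rfl | rfl
        · simp only [Finset.mem_filter, Finset.mem_univ, true_and, hg_def]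
          rw [zero_add, hf0, add_zero]
          exact CharTwo.add_self_eq_zero _
        · simp only [Finset.mem_filter, Finset.mem_univ, true_and]
          exact hgaa z
      calc 2 = ({0, a} : Finset K).card := (Finset.card_pair (Ne.symm ha)).symm
      _ ≤ _ := Finset.card_le_card hsub
    have hhle : h a ≤ n := by
      by_contra hlt
      push_neg at hlt
      have : 2 ^ n < 2 ^ h a := Nat.pow_lt_pow_right (by norm_num) hlt
      nlinarith [hker2]
    have heq : 2 ^ h a * (univ.filter (fun x => g a x = 0)).card
        = 2 ^ h a * 2 ^ (n - h a) := by
      rw [hmul, ← pow_add]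
      congr 1
      omega
    have hkc := Nat.eq_of_mul_eq_mul_left (by positivity) heq
    refine ⟨hkc, ?_⟩
    by_contra hz
    push_neg at hz
    have hz0 : n - h a = 0 := by omega
    rw [hz0, pow_zero] at hkc
    omega
  -- Good pairs count for each a
  have hgood : ∀ a : K, a ≠ 0 →
      ((univ ×ˢ univ).filter (fun p : K × K =>
          g a p.1 = g a p.2 ∧ ¬(p.2 = p.1 ∨ p.2 = p.1 + a))).card + 2 ^ (n + 1)
        = 2 ^ n * 2 ^ (n - h a) := by
    intro a ha
    have hPa : ((univ ×ˢ univ).filter (fun p : K × K => g a p.1 = g a p.2)).card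
        = 2 ^ n * 2 ^ (n - h a) := by
      rw [pairs_card (g a) (hgadd a), hcard, (hker a ha).1]
    have hsplit := Finset.card_filter_add_card_filter_not
      (s := (univ ×ˢ univ).filter (fun p : K × K => g a p.1 = g a p.2))
      (p := fun p : K × K => p.2 = p.1 ∨ p.2 = p.1 + a)
    rw [Finset.filter_filter, Finset.filter_filter] at hsplit
    have hbad : ((univ ×ˢ univ).filter (fun p : K × K =>
        g a p.1 = g a p.2 ∧ (p.2 = p.1 ∨ p.2 = p.1 + a))).card = 2 ^ (n + 1) := by
      have h1 : (univ ×ˢ univ).filter (fun p : K × K =>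
          g a p.1 = g a p.2 ∧ (p.2 = p.1 ∨ p.2 = p.1 + a))
          = (univ ×ˢ univ).filter (fun p : K × K => p.2 = p.1 ∨ p.2 = p.1 + a) := by
        refine Finset.filter_congr fun p _ => ?_
        constructor
        · exact fun hp => hp.2
        · intro hp
          refine ⟨?_, hp⟩
          rcases hp with hp | hp
          · rw [hp]
          · rw [hp, hgadd, hgaa, add_zero]
      have h2 : (univ ×ˢ univ).filter (fun p : K × K => p.2 = p.1 ∨ p.2 = p.1 + a)
          = (univ.image fun x : K => (x, x)) ∪ (univ.image fun x : K => (x, x + a)) := by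
        ext p
        simp only [Finset.mem_filter, Finset.mem_product, Finset.mem_univ, true_and,
          Finset.mem_union, Finset.mem_image]
        constructor
        · rintro (h1 | h1)
          · exact Or.inl ⟨p.1, Prod.ext rfl h1.symm⟩
          · exact Or.inr ⟨p.1, Prod.ext rfl h1.symm⟩
        · rintro (⟨x, rfl⟩ | ⟨x, rfl⟩)
          · exact Or.inl rfl
          · exact Or.inr rfl
      have hdisj : Disjoint (univ.image fun x : K => (x, x))
          (univ.image fun x : K => (x, x + a)) := by
        rw [Finset.disjoint_left]
        rintro p hp1 hp2
        simp only [Finset.mem_image, Finset.mem_univ, true_and] at hp1 hp2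
        obtain ⟨x, rfl⟩ := hp1
        obtain ⟨y, hy⟩ := hp2
        rw [Prod.mk.injEq] at hy
        obtain ⟨rfl, hy2⟩ := hy
        exact ha ((add_eq_left).mp hy2)
      rw [h1, h2, Finset.card_union_of_disjoint hdisj,
        Finset.card_image_of_injective _ (fun x y hxy => congrArg Prod.fst hxy),
        Finset.card_image_of_injective _ (fun x y hxy => congrArg Prod.fst hxy),
        Finset.card_univ, hcard, pow_succ]
      ring
    rw [hbad, hPa] at hsplit
    omega
  -- the ordered quadruple set
  set Q : Finset (K × K × K × K) := univ.filter (fun q =>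
    (q.1 ≠ q.2.1 ∧ q.1 ≠ q.2.2.1 ∧ q.1 ≠ q.2.2.2 ∧ q.2.1 ≠ q.2.2.1 ∧ q.2.1 ≠ q.2.2.2
      ∧ q.2.2.1 ≠ q.2.2.2)
    ∧ q.1 + (q.2.1 + (q.2.2.1 + q.2.2.2)) = 0
    ∧ f q.1 + (f q.2.1 + (f q.2.2.1 + f q.2.2.2)) = 0) with hQ_def
  -- first count of Q : fiberwise over a = x1 + x2
  have hcount1 : Q.card = ∑ a ∈ univ.erase (0 : K),
      ((univ ×ˢ univ).filter (fun p : K × K =>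
        g a p.1 = g a p.2 ∧ ¬(p.2 = p.1 ∨ p.2 = p.1 + a))).card := by
    rw [Finset.card_eq_sum_card_fiberwise (f := fun q : K × K × K × K => q.1 + q.2.1)
      (t := univ.erase (0 : K)) (by
        intro q hq
        rw [Finset.mem_coe, hQ_def, Finset.mem_filter] at hq
        obtain ⟨-, ⟨h12, -⟩, -, -⟩ := hq
        refine Finset.mem_erase.mpr ⟨?_, Finset.mem_univ _⟩
        intro h0
        exact h12 (by linear_combination h0 - q.2.1 * two0))]
    refine Finset.sum_congr rfl fun a haa => ?_
    have ha : a ≠ 0 := (Finset.mem_erase.mp haa).1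
    refine Finset.card_nbij' (fun q => (q.1, q.2.2.1))
      (fun p => (p.1, p.1 + a, p.2, p.2 + a)) ?_ ?_ ?_ ?_
    · intro q hq
      rw [Finset.mem_coe, Finset.mem_filter, hQ_def, Finset.mem_filter] at hq
      obtain ⟨⟨-, ⟨h12, h13, h14, h23, h24, h34⟩, hsum, hfsum⟩, hA⟩ := hq
      have hx2 : q.1 + a = q.2.1 := by linear_combination hA + (a - q.2.1) * two0
      have hx4 : q.2.2.1 + a = q.2.2.2 := by
        linear_combination hsum - hA - q.2.2.2 * two0
      simp only [Finset.mem_coe, Finset.mem_filter, Finset.mem_product, Finset.mem_univ, true_and]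
      refine ⟨?_, ?_⟩
      · simp only [hg_def]
        rw [hx2, hx4]
        linear_combination hfsum - (f q.2.2.1 + f q.2.2.2) * two0
      · push_neg
        exact ⟨fun hEq => h13 hEq.symm, fun hEq => h23 (by rw [← hx2, hEq])⟩
    · intro p hp
      simp only [Finset.mem_coe, Finset.mem_filter, Finset.mem_product, Finset.mem_univ, true_and] at hp
      obtain ⟨hg', hnot⟩ := hp
      push_neg at hnot
      obtain ⟨hne1, hne2⟩ := hnot
      simp only [hg_def] at hg'
      rw [Finset.mem_coe, Finset.mem_filter, hQ_def, Finset.mem_filter]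
      dsimp only
      refine ⟨⟨Finset.mem_univ _, ⟨?_, ?_, ?_, ?_, ?_, ?_⟩, ?_, ?_⟩, ?_⟩
      · exact fun hEq => ha (left_eq_add.mp hEq)
      · exact hne1.symm
      · exact fun hEq => hne2 (by linear_combination -hEq - a * two0)
      · exact fun hEq => hne2 hEq.symm
      · exact fun hEq => hne1 (add_right_cancel hEq).symm
      · exact fun hEq => ha ((left_eq_add).mp hEq)
      · linear_combination (p.1 + p.2 + a) * two0
      · linear_combination hg' + (f (p.2 + a) + f p.2) * two0
      · show p.1 + (p.1 + a) = a
        rw [← add_assoc, CharTwo.add_self_eq_zero, zero_add]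
    · intro q hq
      rw [Finset.mem_coe, Finset.mem_filter, hQ_def, Finset.mem_filter] at hq
      obtain ⟨⟨-, ⟨h12, h13, h14, h23, h24, h34⟩, hsum, hfsum⟩, hA⟩ := hq
      have hx2 : q.1 + a = q.2.1 := by linear_combination hA + (a - q.2.1) * two0
      have hx4 : q.2.2.1 + a = q.2.2.2 := by
        linear_combination hsum - hA - q.2.2.2 * two0
      show (q.1, q.1 + a, q.2.2.1, q.2.2.1 + a) = q
      rw [hx2, hx4]
    · intro p _
      rfl
  -- second count of Q : fiberwise over the underlying 4-set
  have hπmem : ∀ q ∈ Q, ({q.1, q.2.1, q.2.2.1, q.2.2.2} : Finset K) ∈ VF f := by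
    intro q hq
    rw [hQ_def, Finset.mem_filter] at hq
    obtain ⟨-, ⟨h12, h13, h14, h23, h24, h34⟩, hsum, hfsum⟩ := hq
    rw [VF, Finset.mem_filter]
    refine ⟨Finset.mem_univ _, quad_card_s17 _ _ _ _ h12 h13 h14 h23 h24 h34, ?_, ?_⟩
    · rw [quad_sum_s17 id _ _ _ _ h12 h13 h14 h23 h24 h34]
      exact hsum
    · rw [quad_sum_s17 f _ _ _ _ h12 h13 h14 h23 h24 h34]
      exact hfsum
  have hcount2 : Q.card = (VF f).card * 24 := by
    rw [Finset.card_eq_sum_card_fiberwise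
      (f := fun q : K × K × K × K => ({q.1, q.2.1, q.2.2.1, q.2.2.2} : Finset K))
      (t := VF f) hπmem]
    rw [Finset.sum_congr rfl (fun s hs => ?_), Finset.sum_const, smul_eq_mul]
    have hs4 : s.card = 4 := by
      rw [VF, Finset.mem_filter] at hs
      exact hs.2.1
    have hsid : s.sum id = 0 ∧ s.sum f = 0 := by
      rw [VF, Finset.mem_filter] at hs
      exact hs.2.2
    rw [← orderings_card s hs4]
    congr 1
    ext q
    rw [Finset.mem_filter, hQ_def, Finset.mem_filter, Finset.mem_filter]
    constructor
    · rintro ⟨⟨-, hd, -, -⟩, hπ⟩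
      exact ⟨Finset.mem_univ _, hd, hπ⟩
    · rintro ⟨-, ⟨h12, h13, h14, h23, h24, h34⟩, hπ⟩
      refine ⟨⟨Finset.mem_univ _, ⟨h12, h13, h14, h23, h24, h34⟩, ?_, ?_⟩, hπ⟩
      · have := hsid.1
        rw [← hπ, quad_sum_s17 id _ _ _ _ h12 h13 h14 h23 h24 h34] at this
        exact this
      · have := hsid.2
        rw [← hπ, quad_sum_s17 f _ _ _ _ h12 h13 h14 h23 h24 h34] at this
        exact this
  -- per-a formula with subtraction
  have hterm : ∀ a ∈ univ.erase (0 : K),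
      ((univ ×ˢ univ).filter (fun p : K × K =>
        g a p.1 = g a p.2 ∧ ¬(p.2 = p.1 ∨ p.2 = p.1 + a))).card
      = 2 ^ (n + 1) * (2 ^ (n - h a - 1) - 1) := by
    intro a haa
    have ha : a ≠ 0 := (Finset.mem_erase.mp haa).1
    have h1 := hgood a ha
    have h2 := (hker a ha).2
    have e1 : 2 ^ n * 2 ^ (n - h a) = 2 ^ (n + 1) * 2 ^ (n - h a - 1) := by
      rw [← pow_add, ← pow_add]
      congr 1
      omega
    rw [e1] at h1
    rw [Nat.mul_sub, mul_one]
    omega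
  have hQfinal : Q.card = 2 ^ (n + 1) * ∑ a ∈ univ.erase (0 : K), (2 ^ (n - h a - 1) - 1) := by
    rw [hcount1, Finset.sum_congr rfl hterm, Finset.mul_sum]
  rw [hcount2] at hQfinal
  have hpow : 2 ^ (n + 1) = 8 * 2 ^ (n - 2) := by
    have h3 : n + 1 = 3 + (n - 2) := by omega
    rw [h3, pow_add]
    norm_num
  have hfin : 8 * (3 * (VF f).card)
      = 8 * (2 ^ (n - 2) * ∑ a ∈ univ.erase (0 : K), (2 ^ (n - h a - 1) - 1)) := by
    calc 8 * (3 * (VF f).card) = (VF f).card * 24 := by ring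
    _ = 2 ^ (n + 1) * ∑ a ∈ univ.erase (0 : K), (2 ^ (n - h a - 1) - 1) := hQfinal
    _ = 8 * (2 ^ (n - 2) * ∑ a ∈ univ.erase (0 : K), (2 ^ (n - h a - 1) - 1)) := by
        rw [hpow, mul_assoc]
  exact Nat.eq_of_mul_eq_mul_left (by norm_num) hfin
end

section
/- Let s = gcd(t,n) with n/s odd, and let z ∈ F_{2^s} ⊆ F_{2^n} be nonzero. Then the equation x^{2^t} + x = z has no solution x ∈ F_{2^n}. Moreover, for x, y ∈ F_{2^n} and z1, z2 ∈ F_{2^s}, the equality x^{2^t} + x + z1 = y^{2^t} + y + z2 holds if and only if z1 = z2 and x + y ∈ F_{2^s}. -/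
theorem gold_trace_equation {K : Type*} [Field K] [Fintype K] [DecidableEq K]
    (n t : ℕ) (hn : 0 < n) (ht : 0 < t) (hcard : Fintype.card K = 2 ^ n) [CharP K 2]
    (hodd : Odd (n / Nat.gcd t n)) :
    (∀ z : K, z ^ (2 ^ Nat.gcd t n) = z → z ≠ 0 → ¬∃ x : K, x ^ (2 ^ t) + x = z) ∧
      (∀ x y z1 z2 : K, z1 ^ (2 ^ Nat.gcd t n) = z1 → z2 ^ (2 ^ Nat.gcd t n) = z2 →
        (x ^ (2 ^ t) + x + z1 = y ^ (2 ^ t) + y + z2 ↔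
          z1 = z2 ∧ (x + y) ^ (2 ^ Nat.gcd t n) = x + y)) := by
  have fact2 : Fact (Nat.Prime 2) := ⟨Nat.prime_two⟩
  have htwo : (2 : K) = 0 := CharTwo.two_eq_zero
  have hself : ∀ a : K, a + a = 0 := fun a => CharTwo.add_self_eq_zero a
  set s := Nat.gcd t n with hs
  have hs0 : 0 < s := Nat.gcd_pos_of_pos_left n ht
  obtain ⟨k, hk⟩ : s ∣ t := Nat.gcd_dvd_left t n
  obtain ⟨m, hm⟩ : s ∣ n := Nat.gcd_dvd_right t n
  have hm' : n / s = m := by rw [hm, Nat.mul_div_cancel_left _ hs0]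
  have hoddm : Odd m := hm' ▸ hodd
  set f : K → K := (· ^ 2) with hf
  have hpow : ∀ (m : ℕ) (x : K), f^[m] x = x ^ 2 ^ m := by
    intro m
    induction m with
    | zero => intro x; simp
    | succ m ih =>
      intro x
      rw [Function.iterate_succ_apply', ih]
      show (x ^ 2 ^ m) ^ 2 = x ^ 2 ^ (m + 1)
      rw [← pow_mul, ← pow_succ]
  have hP : ∀ (a : ℕ) (x : K), x ^ 2 ^ a = x ↔ Function.IsPeriodicPt f a x := by
    intro a x
    rw [Function.IsPeriodicPt, Function.IsFixedPt, hpow]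
  have hall : ∀ x : K, x ^ 2 ^ n = x := by
    intro x; rw [← hcard]; exact FiniteField.pow_card x
  -- from fixed by 2^s to fixed by 2^t
  have h_s_to_t : ∀ w : K, w ^ 2 ^ s = w → w ^ 2 ^ t = w := by
    intro w hw
    rw [hP]
    have := ((hP s w).mp hw).mul_const k
    rwa [← hk] at this
  -- from fixed by 2^t to fixed by 2^s
  have h_t_to_s : ∀ w : K, w ^ 2 ^ t = w → w ^ 2 ^ s = w := by
    intro w hw
    rw [hP]
    exact ((hP t w).mp hw).gcd ((hP n w).mp (hall w))
  -- core: no nonzero z in F_{2^s} is of the form x^{2^t}+x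
  have hcore : ∀ z : K, z ^ 2 ^ s = z → (∃ x : K, x ^ 2 ^ t + x = z) → z = 0 := by
    intro z hz ⟨x, hx⟩
    have hzt : z ^ 2 ^ t = z := h_s_to_t z hz
    have hxt : x ^ 2 ^ t = z + x := by
      calc x ^ 2 ^ t = x ^ 2 ^ t + x + x := by
            rw [add_assoc, hself, add_zero]
        _ = z + x := by rw [hx]
    have claim : ∀ j : ℕ, x ^ 2 ^ (t * j) = x + (j : K) * z := by
      intro j
      induction j with
      | zero => simp
      | succ j ih =>
        have : x ^ 2 ^ (t * (j + 1)) = (x ^ 2 ^ (t * j)) ^ 2 ^ t := by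
          rw [← pow_mul, ← pow_add, Nat.mul_succ]
        rw [this, ih]
        have hadd : (x + (j : K) * z) ^ 2 ^ t
            = x ^ 2 ^ t + ((j : K) * z) ^ 2 ^ t := add_pow_char_pow _ _ 2 t
        rw [hadd, mul_pow, hxt, hzt]
        have hjc : ((j : K)) ^ 2 ^ t = (j : K) := by
          rcases Nat.even_or_odd j with he | ho
          · obtain ⟨c, hc⟩ := he
            have : (j : K) = 0 := by
              rw [hc]; push_cast; exact hself _
            rw [this, zero_pow (by positivity)]
          · obtain ⟨c, hc⟩ := ho
            have : (j : K) = 1 := by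
              rw [hc]; push_cast; rw [htwo]; ring
            rw [this, one_pow]
        rw [hjc]
        push_cast
        ring
    have hfixtm : x ^ 2 ^ (t * m) = x := by
      rw [hP]
      have := ((hP n x).mp (hall x)).const_mul k
      have htm : t * m = k * n := by rw [hk, hm]; ring
      rwa [← htm] at this
    have := claim m
    rw [hfixtm] at this
    have hmz : (m : K) * z = 0 := left_eq_add.mp this
    obtain ⟨j, hj⟩ := hoddm
    have hm1 : (m : K) = 1 := by
      rw [hj]; push_cast; rw [htwo]; ring
    rwa [hm1, one_mul] at hmz
  constructor
  · intro z hz hz0 hex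
    exact hz0 (hcore z hz hex)
  · intro x y z1 z2 h1 h2
    constructor
    · intro h
      have hwpow : (x + y) ^ 2 ^ t = x ^ 2 ^ t + y ^ 2 ^ t := add_pow_char_pow x y 2 t
      have hw : (x + y) ^ 2 ^ t + (x + y) = z2 + z1 := by
        rw [hwpow]
        linear_combination -h + (x ^ 2 ^ t + x - z2) * htwo
      have hz12 : (z2 + z1) ^ 2 ^ s = z2 + z1 := by
        rw [add_pow_char_pow z2 z1 2 s, h1, h2]
      have hzero : z2 + z1 = 0 := hcore _ hz12 ⟨x + y, hw⟩
      have hz12' : z1 = z2 := by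
        have : z2 = -z1 := eq_neg_of_add_eq_zero_left hzero
        rw [CharTwo.neg_eq] at this
        exact this.symm
      refine ⟨hz12', ?_⟩
      have hwt : (x + y) ^ 2 ^ t = x + y := by
        have := hw
        rw [hzero] at this
        have h2' : (x + y) ^ 2 ^ t + (x + y) + (x + y) = 0 + (x + y) := by rw [this]
        rwa [add_assoc, hself, add_zero, zero_add] at h2'
      exact h_t_to_s _ hwt
    · rintro ⟨hz, hw⟩
      have hwt : (x + y) ^ 2 ^ t = x + y := h_s_to_t _ hw
      have hwpow : (x + y) ^ 2 ^ t = x ^ 2 ^ t + y ^ 2 ^ t := add_pow_char_pow x y 2 t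
      rw [hwpow] at hwt
      linear_combination hz + hwt + (x - y ^ 2 ^ t) * htwo
end

section
/- Let f(x) = x^{2^t+1} on F_{2^n} with gcd(2^t+1, 2^n−1) = 1 and s = gcd(n,t) > 1, and let α ∈ F_{2^n}*. Then for every c ∈ F_{2^n}, the image f(c + αF_{2^s}) is a coset of an s-dimensional F_2-subspace of F_{2^n}; moreover, for c, d ∈ F_{2^n}, the associated subspaces S_c = {f(c+u)+f(c) : u ∈ αF_{2^s}} and S_d satisfy S_c = S_d if c + d ∈ αF_{2^s}, and S_c ∩ S_d = {0} otherwise. -/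
private lemma gold_iterfix {K : Type*} [Monoid K] (x : K) (a : ℕ) (h : x ^ 2 ^ a = x)
    (q : ℕ) : x ^ 2 ^ (a * q) = x := by
  induction q with
  | zero => simp
  | succ q ih =>
    have h2 : 2 ^ (a * (q + 1)) = 2 ^ (a * q) * 2 ^ a := by
      rw [← pow_add, Nat.mul_succ]
    rw [h2, pow_mul, ih, h]

private lemma gold_fixdvd {K : Type*} [Monoid K] (x : K) {a b : ℕ} (hab : a ∣ b)
    (h : x ^ 2 ^ a = x) : x ^ 2 ^ b = x := by
  obtain ⟨k, hk⟩ := hab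
  rw [hk]; exact gold_iterfix x a h k

private lemma gold_gcdfix {K : Type*} [Monoid K] (a b : ℕ) :
    ∀ x : K, x ^ 2 ^ a = x → x ^ 2 ^ b = x → x ^ 2 ^ Nat.gcd a b = x := by
  induction a, b using Nat.gcd.induction with
  | H0 n => intro x _ hb; simpa using hb
  | H1 m n hm ih =>
    intro x ha hb
    rw [Nat.gcd_rec]
    refine ih x ?_ ha
    have hdm : x ^ 2 ^ (m * (n / m)) = x := gold_iterfix x m ha _
    have hcalc : x ^ 2 ^ n = x ^ 2 ^ (n % m) := by
      conv_lhs => rw [← Nat.div_add_mod n m]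
      rw [pow_add, pow_mul, hdm]
    rw [← hcalc, hb]

private lemma gold_odd_aux (n t : ℕ) (hn : 0 < n)
    (hperm : Nat.gcd (2 ^ t + 1) (2 ^ n - 1) = 1) (hs : 1 < Nat.gcd n t) :
    Odd (n / Nat.gcd n t) := by
  set s := Nat.gcd n t with hsdef
  have hs0 : 0 < s := by omega
  have hsn : s ∣ n := Nat.gcd_dvd_left n t
  have hst : s ∣ t := Nat.gcd_dvd_right n t
  rw [← Nat.not_even_iff_odd]
  intro hev
  obtain ⟨j, hj⟩ := hev
  have hcop : Nat.Coprime (n / s) (t / s) := Nat.coprime_div_gcd_div_gcd hs0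
  have hkodd : Odd (t / s) := by
    rw [Nat.odd_iff]
    by_contra h2
    have h2' : 2 ∣ t / s := by omega
    have : 2 ∣ Nat.gcd (n / s) (t / s) := Nat.dvd_gcd ⟨j, by omega⟩ h2'
    rw [hcop] at this; omega
  have ht : 2 ^ t = (2 ^ s) ^ (t / s) := by rw [← pow_mul, Nat.mul_div_cancel' hst]
  have hd1 : 2 ^ s + 1 ∣ 2 ^ t + 1 := by
    have := Odd.nat_add_dvd_pow_add_pow (2 ^ s) 1 hkodd
    simpa [← ht] using this
  have hneq : s * (n / s) = n := Nat.mul_div_cancel' hsn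
  have hn2 : n = 2 * s * j := by rw [← hneq, hj]; ring
  have h2pow : 1 ≤ 2 ^ s := Nat.one_le_two_pow
  have hd2 : 2 ^ s + 1 ∣ 2 ^ n - 1 := by
    have h1 : 2 ^ s + 1 ∣ 2 ^ (2 * s) - 1 := by
      obtain ⟨b, hb⟩ : ∃ b, 2 ^ s = b + 1 := ⟨2 ^ s - 1, by omega⟩
      have hsq : 2 ^ (2 * s) = (b + 1) * (b + 1) := by rw [two_mul, pow_add, hb]
      refine ⟨b, ?_⟩
      have : (b + 1) * (b + 1) = (b + 1 + 1) * b + 1 := by ring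
      rw [hsq, hb]; omega
    have h2 : 2 ^ (2 * s) - 1 ∣ 2 ^ n - 1 := by
      have := Nat.sub_dvd_pow_sub_pow (2 ^ (2 * s)) 1 j
      simpa [← pow_mul, ← hn2] using this
    exact h1.trans h2
  have hdvd : 2 ^ s + 1 ∣ Nat.gcd (2 ^ t + 1) (2 ^ n - 1) := Nat.dvd_gcd hd1 hd2
  rw [hperm] at hdvd
  have := Nat.le_of_dvd one_pos hdvd
  omega

private lemma gold_cardF {K : Type*} [Field K] [Fintype K] [DecidableEq K] (n s : ℕ)
    (hn : 0 < n) (hs : 0 < s) (hsn : s ∣ n) (hcard : Fintype.card K = 2 ^ n) :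
    Set.ncard {z : K | z ^ 2 ^ s = z} = 2 ^ s := by
  classical
  obtain ⟨g, hg⟩ := IsCyclic.exists_generator (α := Kˣ)
  have hNcard : Fintype.card Kˣ = 2 ^ n - 1 := by rw [Fintype.card_units, hcard]
  have horderg : orderOf g = 2 ^ n - 1 := by
    rw [orderOf_eq_card_of_forall_mem_zpowers hg, Nat.card_eq_fintype_card, hNcard]
  have hs1 : 2 ≤ 2 ^ s := by
    calc 2 = 2 ^ 1 := (pow_one 2).symm
    _ ≤ 2 ^ s := Nat.pow_le_pow_right (by norm_num) hs
  have hn1 : 2 ≤ 2 ^ n := by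
    calc 2 = 2 ^ 1 := (pow_one 2).symm
    _ ≤ 2 ^ n := Nat.pow_le_pow_right (by norm_num) hn
  set d := 2 ^ s - 1 with hd
  have hd0 : 0 < d := by omega
  have h2s : 2 ^ s = d + 1 := by omega
  have hdN : d ∣ 2 ^ n - 1 := by
    obtain ⟨m, hm⟩ := hsn
    have := Nat.sub_dvd_pow_sub_pow (2 ^ s) 1 m
    simpa [← pow_mul, ← hm] using this
  set h := g ^ ((2 ^ n - 1) / d) with hh
  have horderh : orderOf h = d := by
    have h1 := orderOf_pow_orderOf_div (x := g) (n := d)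
      (by rw [horderg]; omega) (by rw [horderg]; exact hdN)
    rwa [horderg] at h1
  have hhd : h ^ d = 1 := by rw [← horderh]; exact pow_orderOf_eq_one h
  set A : Finset K := (Finset.range d).image (fun i => ((h ^ i : Kˣ) : K)) with hA
  have hAval : ∀ i : ℕ, (((h ^ i : Kˣ) : K)) ^ 2 ^ s = ((h ^ i : Kˣ) : K) := by
    intro i
    have hpd : (h ^ i) ^ d = 1 := by
      rw [← pow_mul, mul_comm, pow_mul, hhd, one_pow]
    have h1 : ((h ^ i : Kˣ) : K) ^ d = 1 := by
      rw [← Units.val_pow_eq_pow_val, hpd, Units.val_one]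
    rw [h2s, pow_succ, h1, one_mul]
  have hset : {z : K | z ^ 2 ^ s = z} = insert (0 : K) ↑A := by
    ext z
    constructor
    · intro hz
      have hz' : z ^ 2 ^ s = z := hz
      rcases eq_or_ne z 0 with rfl | hz0
      · exact Set.mem_insert _ _
      · refine Set.mem_insert_of_mem _ ?_
        have hzd : z ^ d = 1 := by
          have hzz : z ^ d * z = 1 * z := by
            rw [← pow_succ, ← h2s, hz', one_mul]
          exact mul_right_cancel₀ hz0 hzz
        set zu := Units.mk0 z hz0 with hzu
        have hzud : zu ^ d = 1 := by
          apply Units.ext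
          rw [Units.val_pow_eq_pow_val, Units.val_one]
          exact hzd
        obtain ⟨j, hj0⟩ := (mem_powers_iff_mem_zpowers).mpr (hg zu)
        have hj : g ^ j = zu := hj0
        have hNdvd : (2 ^ n - 1) ∣ j * d := by
          rw [← horderg]
          apply orderOf_dvd_of_pow_eq_one
          rw [pow_mul, hj, hzud]
        have hquot : ((2 ^ n - 1) / d) ∣ j := by
          obtain ⟨u, hu⟩ := hNdvd
          have hNd : (2 ^ n - 1) = ((2 ^ n - 1) / d) * d := (Nat.div_mul_cancel hdN).symm
          refine ⟨u, ?_⟩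
          have h2 : j * d = (((2 ^ n - 1) / d) * u) * d := by
            rw [hu]; conv_lhs => rw [hNd]
            ring
          exact Nat.eq_of_mul_eq_mul_right hd0 h2
        obtain ⟨i, hi⟩ := hquot
        have hzh : h ^ i = zu := by rw [hh, ← pow_mul, ← hi, hj]
        refine Finset.mem_coe.mpr (Finset.mem_image.mpr
          ⟨i % d, Finset.mem_range.mpr (Nat.mod_lt _ hd0), ?_⟩)
        have hmod : h ^ (i % d) = h ^ i := by
          conv_lhs => rw [← horderh]
          exact pow_mod_orderOf h i
        show ((h ^ (i % d) : Kˣ) : K) = z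
        rw [hmod, hzh]
        rfl
    · intro hz
      rcases Set.mem_insert_iff.mp hz with rfl | hz
      · show (0 : K) ^ 2 ^ s = 0
        exact zero_pow (by positivity)
      · obtain ⟨i, _, rfl⟩ := Finset.mem_image.mp (Finset.mem_coe.mp hz)
        exact hAval i
  rw [hset]
  have h0A : (0 : K) ∉ (A : Set K) := by
    intro h0
    obtain ⟨i, _, hi0⟩ := Finset.mem_image.mp (Finset.mem_coe.mp h0)
    exact Units.ne_zero _ hi0
  rw [Set.ncard_insert_of_notMem h0A (A.finite_toSet), Set.ncard_coe_finset]
  have hcardA : A.card = d := by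
    rw [hA, Finset.card_image_of_injOn, Finset.card_range]
    intro i hi j hj hij
    have hu : h ^ i = h ^ j := Units.ext hij
    have hi' : i < orderOf h := by rw [horderh]; exact Finset.mem_range.mp (by simpa using hi)
    have hj' : j < orderOf h := by rw [horderh]; exact Finset.mem_range.mp (by simpa using hj)
    exact pow_injOn_Iio_orderOf hi' hj' hu
  rw [hcardA]; omega

theorem gold_skew_cover {K : Type*} [Field K] [Fintype K] [DecidableEq K]
    (n t : ℕ) (hn : 0 < n) (hcard : Fintype.card K = 2 ^ n) [CharP K 2]
    (hperm : Nat.gcd (2 ^ t + 1) (2 ^ n - 1) = 1) (hs : 1 < Nat.gcd n t)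
    (α : K) (hα : α ≠ 0)
    (f : K → K) (hf : ∀ x : K, f x = x ^ (2 ^ t + 1))
    (Fα : Set K) (hFα : Fα = {w : K | ∃ z : K, z ^ (2 ^ Nat.gcd n t) = z ∧ w = α * z})
    (S : K → Set K) (hS : ∀ c : K, S c = {w : K | ∃ u ∈ Fα, w = f (c + u) + f c}) :
    (∀ c : K,
        Set.ncard (S c) = 2 ^ Nat.gcd n t ∧
        (0 : K) ∈ S c ∧
        (∀ u v : K, u ∈ S c → v ∈ S c → u + v ∈ S c) ∧
        f '' {x : K | ∃ u ∈ Fα, x = c + u} = {y : K | ∃ w ∈ S c, y = f c + w}) ∧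
      (∀ c d : K,
        (c + d ∈ Fα → S c = S d) ∧ (c + d ∉ Fα → S c ∩ S d = {0})) := by
  classical
  have hmodd : Odd (n / Nat.gcd n t) := gold_odd_aux n t hn hperm hs
  set s := Nat.gcd n t with hsdef
  have hs0 : 0 < s := by omega
  have hsn : s ∣ n := Nat.gcd_dvd_left n t
  have hst : s ∣ t := Nat.gcd_dvd_right n t
  set m := n / s with hmdef
  have hm : s * m = n := Nat.mul_div_cancel' hsn
  have htwo : (2 : K) = 0 := CharTwo.two_eq_zero
  have hxcard : ∀ x : K, x ^ 2 ^ n = x := by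
    intro x; rw [← hcard]; exact FiniteField.pow_card x
  have hzq : ∀ z : K, z ^ 2 ^ s = z → z ^ 2 ^ t = z := fun z hz => gold_fixdvd z hst hz
  have hk0 : 2 ^ t + 1 ≠ 0 := by positivity
  -- f is injective
  have hfinj : Function.Injective f := by
    intro a b hab
    rw [hf, hf] at hab
    rcases eq_or_ne a 0 with rfl | ha0
    · rw [zero_pow hk0] at hab
      exact (pow_eq_zero_iff hk0).mp hab.symm |>.symm
    rcases eq_or_ne b 0 with rfl | hb0
    · rw [zero_pow hk0] at hab
      exact (pow_eq_zero_iff hk0).mp hab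
    have hdiv : (a / b) ^ (2 ^ t + 1) = 1 := by
      rw [div_pow, hab, div_self (pow_ne_zero _ hb0)]
    have hdiv2 : (a / b) ^ (2 ^ n - 1) = 1 := by
      have := FiniteField.pow_card_sub_one_eq_one (a / b) (div_ne_zero ha0 hb0)
      rwa [hcard] at this
    have h1 : orderOf (a / b) ∣ Nat.gcd (2 ^ t + 1) (2 ^ n - 1) :=
      Nat.dvd_gcd (orderOf_dvd_of_pow_eq_one hdiv) (orderOf_dvd_of_pow_eq_one hdiv2)
    rw [hperm, Nat.dvd_one] at h1
    exact (div_eq_one_iff_eq hb0).mp (orderOf_eq_one_iff.mp h1)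
  -- the key algebraic identity
  have key : ∀ c z : K, z ^ 2 ^ s = z →
      f (c + α * z) + f c
        = (c ^ 2 ^ t * α + c * α ^ 2 ^ t) * z + α ^ 2 ^ t * α * z ^ 2 := by
    intro c z hz
    have hz2 : z ^ 2 ^ t = z := hzq z hz
    rw [hf, hf, pow_succ, pow_succ]
    rw [add_pow_char_pow, mul_pow, hz2]
    have hring : (c ^ 2 ^ t + α ^ 2 ^ t * z) * (c + α * z) + c ^ 2 ^ t * c
        = (c ^ 2 ^ t * α + c * α ^ 2 ^ t) * z + α ^ 2 ^ t * α * z ^ 2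
          + (c ^ 2 ^ t * c + c ^ 2 ^ t * c) := by ring
    rw [hring, CharTwo.add_self_eq_zero, add_zero]
  -- normal form of S c
  have hSc : ∀ c : K, S c = {w : K | ∃ z : K, z ^ 2 ^ s = z ∧
      w = (c ^ 2 ^ t * α + c * α ^ 2 ^ t) * z + α ^ 2 ^ t * α * z ^ 2} := by
    intro c
    rw [hS]
    ext w
    simp only [hFα, Set.mem_setOf_eq]
    constructor
    · rintro ⟨u, ⟨z, hzfix, rfl⟩, rfl⟩
      exact ⟨z, hzfix, key c z hzfix⟩
    · rintro ⟨z, hzfix, rfl⟩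
      exact ⟨α * z, ⟨z, hzfix, rfl⟩, (key c z hzfix).symm⟩
  -- cardinality
  have hcount : ∀ c : K, Set.ncard (S c) = 2 ^ s := by
    intro c
    have hinj : Set.InjOn
        (fun z => (c ^ 2 ^ t * α + c * α ^ 2 ^ t) * z + α ^ 2 ^ t * α * z ^ 2)
        {z : K | z ^ 2 ^ s = z} := by
      intro z1 h1 z2 h2 heq
      simp only [Set.mem_setOf_eq] at h1 h2
      have e1 := key c z1 h1
      have e2 := key c z2 h2
      have e3 : f (c + α * z1) + f c = f (c + α * z2) + f c := by
        rw [e1, e2]; exact heq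
      have e4 : f (c + α * z1) = f (c + α * z2) := add_right_cancel e3
      have e5 : c + α * z1 = c + α * z2 := hfinj e4
      exact mul_left_cancel₀ hα (add_left_cancel e5)
    have him : S c = (fun z => (c ^ 2 ^ t * α + c * α ^ 2 ^ t) * z
        + α ^ 2 ^ t * α * z ^ 2) '' {z : K | z ^ 2 ^ s = z} := by
      rw [hSc c]
      ext w
      constructor
      · rintro ⟨z, h1, h2⟩
        exact ⟨z, h1, h2.symm⟩
      · rintro ⟨z, h1, h2⟩
        exact ⟨z, h1, h2.symm⟩
    rw [him, Set.ncard_image_of_injOn hinj]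
    exact gold_cardF n s hn hs0 hsn hcard
  -- zero membership
  have hzero : ∀ c : K, (0 : K) ∈ S c := by
    intro c
    rw [hSc c]
    refine ⟨0, ?_, by ring⟩
    exact zero_pow (by positivity)
  -- additive closure
  have hFadd : ∀ z1 z2 : K, z1 ^ 2 ^ s = z1 → z2 ^ 2 ^ s = z2 →
      (z1 + z2) ^ 2 ^ s = z1 + z2 := by
    intro z1 z2 h1 h2
    rw [add_pow_char_pow, h1, h2]
  have hadd : ∀ c u v : K, u ∈ S c → v ∈ S c → u + v ∈ S c := by
    intro c u v hu hv
    rw [hSc c] at hu hv ⊢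
    obtain ⟨z1, h1, rfl⟩ := hu
    obtain ⟨z2, h2, rfl⟩ := hv
    refine ⟨z1 + z2, hFadd z1 z2 h1 h2, ?_⟩
    have hsq : (z1 + z2) ^ 2 = z1 ^ 2 + z2 ^ 2 := add_pow_char z1 z2 2
    rw [hsq]; ring
  -- image description
  have hcancel : ∀ a b : K, a + (b + a) = b := by
    intro a b
    rw [add_comm b a, ← add_assoc, CharTwo.add_self_eq_zero, zero_add]
  have himage : ∀ c : K,
      f '' {x : K | ∃ u ∈ Fα, x = c + u} = {y : K | ∃ w ∈ S c, y = f c + w} := by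
    intro c
    ext y
    constructor
    · rintro ⟨x, ⟨u, hu, rfl⟩, rfl⟩
      refine ⟨f (c + u) + f c, ?_, ?_⟩
      · rw [hS]; exact ⟨u, hu, rfl⟩
      · exact (hcancel (f c) (f (c + u))).symm
    · rintro ⟨w, hw, rfl⟩
      rw [hS] at hw
      obtain ⟨u, hu, rfl⟩ := hw
      exact ⟨c + u, ⟨u, hu, rfl⟩, (hcancel (f c) (f (c + u))).symm⟩
  -- equal subspaces on the same coset
  have hcoset : ∀ c d : K, c + d ∈ Fα → S c = S d := by
    intro c d hcd
    rw [hFα] at hcd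
    obtain ⟨z0, hz0, hcd⟩ := hcd
    have hd : d = c + α * z0 := by
      have h1 : c + (c + d) = d := by
        rw [← add_assoc, CharTwo.add_self_eq_zero, zero_add]
      rw [← h1, hcd]
    have hAeq : d ^ 2 ^ t * α + d * α ^ 2 ^ t = c ^ 2 ^ t * α + c * α ^ 2 ^ t := by
      rw [hd, add_pow_char_pow, mul_pow, hzq z0 hz0]
      have hring : (c ^ 2 ^ t + α ^ 2 ^ t * z0) * α + (c + α * z0) * α ^ 2 ^ t
          = c ^ 2 ^ t * α + c * α ^ 2 ^ t
            + (α ^ 2 ^ t * α * z0 + α ^ 2 ^ t * α * z0) := by ring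
      rw [hring, CharTwo.add_self_eq_zero, add_zero]
    rw [hSc c, hSc d, hAeq]
  -- the trace map
  set T : K → K := fun x => ∑ i ∈ Finset.range m, x ^ 2 ^ (s * i) with hT
  have hTshift : ∀ x : K, T (x ^ 2 ^ s) = T x := by
    intro x
    have hterm : ∀ i : ℕ, (x ^ 2 ^ s) ^ 2 ^ (s * i) = x ^ 2 ^ (s * (i + 1)) := by
      intro i
      have hexp : s + s * i = s * (i + 1) := by ring
      rw [← pow_mul, ← pow_add, hexp]
    have hsm : x ^ 2 ^ (s * m) = x := by rw [hm]; exact hxcard x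
    have e0 : x ^ 2 ^ (s * 0) = x := by norm_num
    have h1 := Finset.sum_range_succ' (fun i => x ^ 2 ^ (s * i)) m
    have h2 := Finset.sum_range_succ (fun i => x ^ 2 ^ (s * i)) m
    simp only [hT]
    calc (∑ i ∈ Finset.range m, (x ^ 2 ^ s) ^ 2 ^ (s * i))
        = ∑ i ∈ Finset.range m, x ^ 2 ^ (s * (i + 1)) :=
          Finset.sum_congr rfl (fun i _ => hterm i)
      _ = ∑ i ∈ Finset.range m, x ^ 2 ^ (s * i) := by
          have h3 : (∑ i ∈ Finset.range m, x ^ 2 ^ (s * (i + 1))) + x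
              = (∑ i ∈ Finset.range m, x ^ 2 ^ (s * i)) + x := by
            calc (∑ i ∈ Finset.range m, x ^ 2 ^ (s * (i + 1))) + x
                = (∑ i ∈ Finset.range m, x ^ 2 ^ (s * (i + 1))) + x ^ 2 ^ (s * 0) := by
                  rw [e0]
              _ = ∑ i ∈ Finset.range (m + 1), x ^ 2 ^ (s * i) := h1.symm
              _ = (∑ i ∈ Finset.range m, x ^ 2 ^ (s * i)) + x ^ 2 ^ (s * m) := h2
              _ = (∑ i ∈ Finset.range m, x ^ 2 ^ (s * i)) + x := by rw [hsm]
          exact add_right_cancel h3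
  have hTiter : ∀ j : ℕ, ∀ x : K, T (x ^ 2 ^ (s * j)) = T x := by
    intro j
    induction j with
    | zero => intro x; norm_num
    | succ j ih =>
      intro x
      have hx : x ^ 2 ^ (s * (j + 1)) = (x ^ 2 ^ (s * j)) ^ 2 ^ s := by
        have hexp : s * j + s = s * (j + 1) := by ring
        rw [← pow_mul, ← pow_add, hexp]
      rw [hx, hTshift, ih]
  have hTt : ∀ x : K, T (x ^ 2 ^ t) = T x := by
    intro x
    obtain ⟨k, hk⟩ := hst
    rw [hk]
    exact hTiter k x
  have hTfix : ∀ y : K, y ^ 2 ^ s = y → T y = y := by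
    intro y hy
    have hconst : ∀ i ∈ Finset.range m, y ^ 2 ^ (s * i) = y :=
      fun i _ => gold_iterfix y s hy i
    obtain ⟨r, hr⟩ := hmodd
    simp only [hT]
    rw [Finset.sum_congr rfl hconst, Finset.sum_const, Finset.card_range]
    show m • y = y
    rw [hr, add_nsmul, one_nsmul, mul_comm 2 r, mul_nsmul, CharTwo.two_nsmul, zero_add]
  have hTg : ∀ x : K, T (x ^ 2 ^ t + x) = 0 := by
    intro x
    have hsplit : T (x ^ 2 ^ t + x) = T (x ^ 2 ^ t) + T x := by
      simp only [hT]
      rw [← Finset.sum_add_distrib]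
      exact Finset.sum_congr rfl fun i _ => add_pow_char_pow _ _ 2 (s * i)
    rw [hsplit, hTt, CharTwo.add_self_eq_zero]
  -- disjointness
  have hdisj : ∀ c d : K, c + d ∉ Fα → S c ∩ S d = {0} := by
    intro c d hcd
    have hsum_pow : (c + d) ^ 2 ^ t = c ^ 2 ^ t + d ^ 2 ^ t := add_pow_char_pow c d 2 t
    set μ : K := α⁻¹ with hμdef
    have hμ : α * μ = 1 := mul_inv_cancel₀ hα
    have hμq : α ^ 2 ^ t * μ ^ 2 ^ t = 1 := by rw [← mul_pow, hμ, one_pow]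
    have hBne : α ^ 2 ^ t * α ≠ 0 := mul_ne_zero (pow_ne_zero _ hα) hα
    -- E ≠ 0
    have hE : (c ^ 2 ^ t * α + c * α ^ 2 ^ t) + (d ^ 2 ^ t * α + d * α ^ 2 ^ t) ≠ 0 := by
      intro h0
      apply hcd
      rw [hFα]
      refine ⟨(c + d) * μ, ?_, by rw [hμdef]; field_simp⟩
      have h1 : (c + d) ^ 2 ^ t * α = (c + d) * α ^ 2 ^ t := by
        rw [hsum_pow]
        linear_combination h0 - (c * α ^ 2 ^ t + d * α ^ 2 ^ t) * htwo
      have heq : ((c + d) * μ) ^ 2 ^ t = (c + d) * μ := by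
        rw [mul_pow]
        linear_combination (μ * μ ^ 2 ^ t) * h1 - ((c + d) ^ 2 ^ t * μ ^ 2 ^ t) * hμ
          + ((c + d) * μ) * hμq
      exact gold_gcdfix n t _ (hxcard _) heq
    ext w
    simp only [Set.mem_inter_iff, Set.mem_singleton_iff]
    constructor
    · rintro ⟨hw1, hw2⟩
      rw [hSc c] at hw1
      rw [hSc d] at hw2
      obtain ⟨z, hzf, hw1⟩ := hw1
      obtain ⟨z', hzf', hw2⟩ := hw2
      have h0 : ((c ^ 2 ^ t * α + c * α ^ 2 ^ t) * z + α ^ 2 ^ t * α * z ^ 2)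
          + ((d ^ 2 ^ t * α + d * α ^ 2 ^ t) * z' + α ^ 2 ^ t * α * z' ^ 2) = 0 := by
        rw [← hw1, ← hw2, CharTwo.add_self_eq_zero]
      have hyf : (z + z') ^ 2 ^ s = z + z' := hFadd z z' hzf hzf'
      have hyq : (z + z') ^ 2 ^ t = z + z' := hzq _ hyf
      have hz'q : z' ^ 2 ^ t = z' := hzq _ hzf'
      have hsq : (z + z') ^ 2 = z ^ 2 + z' ^ 2 := add_pow_char z z' 2
      have hyz : (c ^ 2 ^ t * α + c * α ^ 2 ^ t) * (z + z')
            + α ^ 2 ^ t * α * (z + z') ^ 2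
          = ((c ^ 2 ^ t * α + c * α ^ 2 ^ t) + (d ^ 2 ^ t * α + d * α ^ 2 ^ t)) * z' := by
        linear_combination h0 + (α ^ 2 ^ t * α) * hsq
          - ((d ^ 2 ^ t * α + d * α ^ 2 ^ t) * z') * htwo
      -- the auxiliary element M
      set M : K := c * μ * (z + z') + (c + d) * μ * z' with hM
      have hMq : M ^ 2 ^ t = c ^ 2 ^ t * μ ^ 2 ^ t * (z + z')
          + (c ^ 2 ^ t + d ^ 2 ^ t) * μ ^ 2 ^ t * z' := by
        rw [hM, add_pow_char_pow, mul_pow, mul_pow, mul_pow, mul_pow, hyq, hz'q, hsum_pow]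
      have hy2 : (z + z') ^ 2 = M ^ 2 ^ t + M := by
        apply mul_left_cancel₀ hBne
        rw [hMq, hM]
        linear_combination hyz
          - (α * c ^ 2 ^ t * (z + z') + α * (c ^ 2 ^ t + d ^ 2 ^ t) * z') * hμq
          - (α ^ 2 ^ t * c * (z + z') + α ^ 2 ^ t * (c + d) * z') * hμ
          - ((c ^ 2 ^ t * α + c * α ^ 2 ^ t) * (z + z')) * htwo
      have hy2f : ((z + z') ^ 2) ^ 2 ^ s = (z + z') ^ 2 := by
        rw [← pow_mul, mul_comm, pow_mul, hyf]
      have hy2zero : (z + z') ^ 2 = 0 := by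
        calc (z + z') ^ 2 = T ((z + z') ^ 2) := (hTfix _ hy2f).symm
          _ = T (M ^ 2 ^ t + M) := by rw [← hy2]
          _ = 0 := hTg M
      have hyzero : z + z' = 0 := by
        exact pow_eq_zero_iff (two_ne_zero) |>.mp hy2zero
      have hzz : z = z' := by
        have h1 := CharTwo.add_eq_iff_eq_add.mp hyzero
        simpa using h1
      rw [← hzz] at hw2
      have hEz : ((c ^ 2 ^ t * α + c * α ^ 2 ^ t) + (d ^ 2 ^ t * α + d * α ^ 2 ^ t)) * z
          = 0 := by
        linear_combination hw1 - hw2 + ((c ^ 2 ^ t * α + c * α ^ 2 ^ t) * z) * htwo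
      have hz0 : z = 0 := by
        rcases mul_eq_zero.mp hEz with h | h
        · exact absurd h hE
        · exact h
      rw [hz0] at hw1
      simpa using hw1
    · rintro rfl
      exact ⟨hzero c, hzero d⟩
  exact ⟨fun c => ⟨hcount c, hzero c, hadd c, himage c⟩,
    fun c d => ⟨hcoset c d, hdisj c d⟩⟩
end
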